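/- Let G = (μ,V,W,E,P,f,g) be a maximal GCD graph with edge density δ > 0, and let t ≥ exp(exp(C₆)) and U ≥ 2C₆·log log t be real numbers. Assume that R♭(G) = ∅ and that E ⊆ {(v,w) ∈ V×W : ω_t(v,w) ≥ U}, where ω_t(v,w) = #{p prime : p | vw/gcd(v,w)², p ≤ t}. Then there exists a GCD subgraph G' = (μ,V,W,E',P,f,g) of G such that q(G') ≥ q(G)/2 > 0 and E' ⊆ {(v,w) ∈ V×W : #{p prime : p | vw/gcd(v,w)², C₆ < p ≤ t, p ∉ R(G)} ≥ U/2}. -/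

import Mathlib

open Finset

/-- A (bipartite) GCD graph: a measure `μ` on `ℕ`, finite vertex sets `V, W` of positive
integers, an edge set `E ⊆ V × W`, a (finite) set of primes `P`, and exponent functions
`f, g` such that for every `p ∈ P`: `p^{f(p)} ∣ v` for all `v ∈ V`, `p^{g(p)} ∣ w` for all
`w ∈ W`, and `p^{min(f(p),g(p))}` exactly divides `gcd(v, w)` for every edge `(v, w)`. -/
structure GCDGraph where
  mu : ℕ → ℝ
  mu_nonneg : ∀ n, 0 ≤ mu n
  V : Finset ℕ
  W : Finset ℕ
  V_pos : ∀ v ∈ V, 0 < v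
  W_pos : ∀ w ∈ W, 0 < w
  E : Finset (ℕ × ℕ)
  E_sub : E ⊆ V ×ˢ W
  P : Finset ℕ
  P_prime : ∀ p ∈ P, p.Prime
  f : ℕ → ℕ
  g : ℕ → ℕ
  f_dvd : ∀ p ∈ P, ∀ v ∈ V, p ^ f p ∣ v
  g_dvd : ∀ p ∈ P, ∀ w ∈ W, p ^ g p ∣ w
  gcd_exact : ∀ p ∈ P, ∀ e ∈ E,
    p ^ min (f p) (g p) ∣ Nat.gcd e.1 e.2 ∧ ¬ p ^ (min (f p) (g p) + 1) ∣ Nat.gcd e.1 e.2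

namespace GCDGraph

/-- The measure of a finite set of integers: `μ(S) = ∑_{n ∈ S} μ(n)`. -/
noncomputable def muSet (mu : ℕ → ℝ) (S : Finset ℕ) : ℝ := ∑ n ∈ S, mu n

/-- The measure of a finite set of pairs: `μ(E) = ∑_{(n₁,n₂) ∈ E} μ(n₁) μ(n₂)`. -/
noncomputable def muEdges (mu : ℕ → ℝ) (E : Finset (ℕ × ℕ)) : ℝ := ∑ e ∈ E, mu e.1 * mu e.2

/-- Edge density `δ = μ(E) / (μ(V) μ(W))` (equal to `0` when `μ(V) μ(W) = 0`,
by the Lean convention `x / 0 = 0`). -/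
noncomputable def densityRaw (mu : ℕ → ℝ) (V W : Finset ℕ) (E : Finset (ℕ × ℕ)) : ℝ :=
  muEdges mu E / (muSet mu V * muSet mu W)

/-- The quality
`q = δ^{2+τ} μ(V) μ(W) ∏_{p ∈ P} p^{|f(p)-g(p)|} (1 - 1_{f(p)=g(p)≥1}/p)^{-2} (1 - p^{-1-τ/4})^{-3}`. -/
noncomputable def qualityRaw (τ : ℝ) (mu : ℕ → ℝ) (V W : Finset ℕ) (E : Finset (ℕ × ℕ))
    (P : Finset ℕ) (f g : ℕ → ℕ) : ℝ :=
  densityRaw mu V W E ^ (2 + τ) * muSet mu V * muSet mu W *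
    ∏ p ∈ P, ((p : ℝ) ^ (((f p : ℤ) - (g p : ℤ)).natAbs) *
      ((1 - (if f p = g p ∧ 1 ≤ f p then ((p : ℝ))⁻¹ else 0))⁻¹) ^ 2 *
      ((1 - (p : ℝ) ^ (-1 - τ / 4))⁻¹) ^ 3)

/-- The edge density of a GCD graph. -/
noncomputable def density (G : GCDGraph) : ℝ := densityRaw G.mu G.V G.W G.E

/-- The quality of a GCD graph (with parameter `τ`). -/
noncomputable def quality (τ : ℝ) (G : GCDGraph) : ℝ :=
  qualityRaw τ G.mu G.V G.W G.E G.P G.f G.g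

/-- `G'` is a GCD subgraph of `G`. -/
def IsSubgraph (G' G : GCDGraph) : Prop :=
  G'.mu = G.mu ∧ G'.V ⊆ G.V ∧ G'.W ⊆ G.W ∧ G'.E ⊆ G.E ∧ G.P ⊆ G'.P ∧
    (∀ p ∈ G.P, G'.f p = G.f p) ∧ (∀ p ∈ G.P, G'.g p = G.g p)

/-- `G` is `(P,f,g)`-maximal: every GCD subgraph with the same multiplicative data has
quality at most `q(G)`. -/
def IsMaximal (τ : ℝ) (G : GCDGraph) : Prop :=
  ∀ G' : GCDGraph, IsSubgraph G' G → G'.P = G.P → quality τ G' ≤ quality τ G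

/-- `R(G)`: the set of primes `p ∉ P` dividing `gcd(v,w)` for some edge `(v,w)`. -/
def R (G : GCDGraph) : Set ℕ :=
  {p | p.Prime ∧ p ∉ G.P ∧ ∃ e ∈ G.E, p ∣ Nat.gcd e.1 e.2}

/-- `S_{p^k}`: the subset of elements of `S` exactly divisible by `p^k`. -/
def exactPart (S : Finset ℕ) (p k : ℕ) : Finset ℕ :=
  S.filter fun v => p ^ k ∣ v ∧ ¬ p ^ (k + 1) ∣ v

/-- `E_{p^k, p^ℓ} = E ∩ (V_{p^k} × W_{p^ℓ})`. -/
def edgesAt (G : GCDGraph) (p k l : ℕ) : Finset (ℕ × ℕ) :=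
  G.E.filter fun e => e.1 ∈ exactPart G.V p k ∧ e.2 ∈ exactPart G.W p l

/-- The quality of the GCD subgraph `G_{p^k, p^ℓ}`, with vertex sets `V_{p^k}`, `W_{p^ℓ}`,
edges `E_{p^k,p^ℓ}`, prime set `P ∪ {p}` and `f, g` extended by `f(p) = k`, `g(p) = ℓ`. -/
noncomputable def qualityAt (τ : ℝ) (G : GCDGraph) (p k l : ℕ) : ℝ :=
  qualityRaw τ G.mu (exactPart G.V p k) (exactPart G.W p l) (edgesAt G p k l)
    (insert p G.P) (Function.update G.f p k) (Function.update G.g p l)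

noncomputable def C1 (τ : ℝ) : ℝ := 10 ^ 4 / τ
noncomputable def C2 (τ M : ℝ) : ℝ := 10 * M * C1 τ ^ 3
noncomputable def C3 (τ : ℝ) : ℝ := 10 ^ 3 * C1 τ ^ 3
noncomputable def C4 (τ M : ℝ) : ℝ := 10 ^ 10 * M ^ 2 * C2 τ M ^ 2
noncomputable def C5 (τ M : ℝ) : ℝ := max (C3 τ) ((50 * Real.log (C4 τ M)) ^ 3)
noncomputable def C6 (τ M : ℝ) : ℝ :=
  max (C4 τ M) (max (10 ^ 4 * M * C2 τ M) (C2 τ M ^ (10 / τ)))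
noncomputable def C7 (τ M : ℝ) : ℝ := C5 τ M ^ C6 τ M

/-- `R♯(G)`: those `p ∈ R(G)` admitting `k ≥ 0` with `μ(V_{p^k})/μ(V) ≥ 1 − C₂/p` and
`μ(W_{p^k})/μ(W) ≥ 1 − C₂/p`, and such that `q(G_{p^a,p^b}) < M q(G)` for all `a ≠ b`. -/
def Rsharp (τ M : ℝ) (G : GCDGraph) : Set ℕ :=
  {p ∈ R G |
    (∃ k : ℕ, 1 - C2 τ M / (p : ℝ) ≤ muSet G.mu (exactPart G.V p k) / muSet G.mu G.V ∧
        1 - C2 τ M / (p : ℝ) ≤ muSet G.mu (exactPart G.W p k) / muSet G.mu G.W) ∧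
    ∀ a b : ℕ, a ≠ b → qualityAt τ G p a b < M * quality τ G}

/-- `R♭(G) = R(G) \ R♯(G)`. -/
def Rflat (τ M : ℝ) (G : GCDGraph) : Set ℕ := R G \ Rsharp τ M G

/-- The neighbourhood `Γ_G(v) = {w ∈ W : (v,w) ∈ E}` of a left vertex. -/
def nbhdOfV (G : GCDGraph) (v : ℕ) : Finset ℕ := G.W.filter fun w => (v, w) ∈ G.E

/-- The neighbourhood `Γ_G(w) = {v ∈ V : (v,w) ∈ E}` of a right vertex. -/
def nbhdOfW (G : GCDGraph) (w : ℕ) : Finset ℕ := G.V.filter fun v => (v, w) ∈ G.E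

end GCDGraph

open GCDGraph

/-- `ω_t(v,w) = #{p prime : p | vw/gcd(v,w)², p ≤ t}`. -/
noncomputable def omegaFun (t : ℝ) (q r : ℕ) : ℕ :=
  ((q * r / Nat.gcd q r ^ 2).primeFactors.filter (fun p : ℕ => (p : ℝ) ≤ t)).card

open scoped Classical in
/-- `#{p prime : p | vw/gcd(v,w)², c < p ≤ t, p ∉ S}`. -/
noncomputable def omegaFunRes (c t : ℝ) (S : Set ℕ) (q r : ℕ) : ℕ :=
  ((q * r / Nat.gcd q r ^ 2).primeFactors.filter
      (fun p : ℕ => c < (p : ℝ) ∧ (p : ℝ) ≤ t ∧ p ∉ S)).card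

namespace CosAux
open GCDGraph

lemma muSet_nonneg (mu : ℕ → ℝ) (h : ∀ n, 0 ≤ mu n) (S : Finset ℕ) : 0 ≤ muSet mu S :=
  Finset.sum_nonneg fun n _ => h n

lemma muSet_mono (mu : ℕ → ℝ) (h : ∀ n, 0 ≤ mu n) {S T : Finset ℕ} (hST : S ⊆ T) :
    muSet mu S ≤ muSet mu T :=
  Finset.sum_le_sum_of_subset_of_nonneg hST fun n _ _ => h n

lemma muEdges_nonneg (mu : ℕ → ℝ) (h : ∀ n, 0 ≤ mu n) (E : Finset (ℕ × ℕ)) :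
    0 ≤ muEdges mu E :=
  Finset.sum_nonneg fun e _ => mul_nonneg (h e.1) (h e.2)

lemma muEdges_mono (mu : ℕ → ℝ) (h : ∀ n, 0 ≤ mu n) {E F : Finset (ℕ × ℕ)} (hEF : E ⊆ F) :
    muEdges mu E ≤ muEdges mu F :=
  Finset.sum_le_sum_of_subset_of_nonneg hEF fun e _ _ => mul_nonneg (h e.1) (h e.2)

lemma muEdges_le_mul (mu : ℕ → ℝ) (h : ∀ n, 0 ≤ mu n) {V W : Finset ℕ} {E : Finset (ℕ × ℕ)}
    (hE : E ⊆ V ×ˢ W) : muEdges mu E ≤ muSet mu V * muSet mu W := by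
  refine le_trans (muEdges_mono mu h hE) (le_of_eq ?_)
  rw [muEdges, Finset.sum_product, muSet, muSet, Finset.sum_mul]
  exact Finset.sum_congr rfl fun v _ => by rw [Finset.mul_sum]

noncomputable def pfac (τ : ℝ) (f g : ℕ → ℕ) (p : ℕ) : ℝ :=
  (p : ℝ) ^ (((f p : ℤ) - (g p : ℤ)).natAbs) *
    ((1 - (if f p = g p ∧ 1 ≤ f p then ((p : ℝ))⁻¹ else 0))⁻¹) ^ 2 *
    ((1 - (p : ℝ) ^ (-1 - τ / 4))⁻¹) ^ 3

lemma qualityRaw_eq (τ : ℝ) (mu : ℕ → ℝ) (V W : Finset ℕ) (E : Finset (ℕ × ℕ))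
    (P : Finset ℕ) (f g : ℕ → ℕ) :
    qualityRaw τ mu V W E P f g =
      densityRaw mu V W E ^ (2 + τ) * muSet mu V * muSet mu W * ∏ p ∈ P, pfac τ f g p := rfl

lemma pfac_pos {τ : ℝ} (hτ0 : 0 < τ) {p : ℕ} (hp : p.Prime) (f g : ℕ → ℕ) :
    0 < pfac τ f g p := by
  have hp1 : (1:ℝ) < p := by exact_mod_cast hp.one_lt
  have hp0 : (0:ℝ) < p := by linarith
  have h3 : (p:ℝ) ^ (-1 - τ/4) < 1 :=
    Real.rpow_lt_one_of_one_lt_of_neg hp1 (by linarith)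
  have h3' : 0 < 1 - (p:ℝ) ^ (-1-τ/4) := by linarith
  have h2 : (if f p = g p ∧ 1 ≤ f p then ((p : ℝ))⁻¹ else 0) < 1 := by
    split
    · rw [inv_lt_one_iff₀]; right; exact hp1
    · norm_num
  have h2' : (0:ℝ) < 1 - (if f p = g p ∧ 1 ≤ f p then ((p : ℝ))⁻¹ else 0) := by linarith
  exact mul_pos (mul_pos (pow_pos hp0 _) (pow_pos (inv_pos.mpr h2') 2))
    (pow_pos (inv_pos.mpr h3') 3)

lemma pfac_ge {τ : ℝ} (hτ0 : 0 < τ) {p : ℕ} (hp : p.Prime) {f g : ℕ → ℕ}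
    (hne : f p ≠ g p) :
    (p : ℝ) ^ (((f p : ℤ) - (g p : ℤ)).natAbs) ≤ pfac τ f g p := by
  have hp1 : (1:ℝ) < p := by exact_mod_cast hp.one_lt
  have hp0 : (0:ℝ) < p := by linarith
  have h3 : (p:ℝ) ^ (-1 - τ/4) < 1 :=
    Real.rpow_lt_one_of_one_lt_of_neg hp1 (by linarith)
  have h30 : 0 < (p:ℝ) ^ (-1 - τ/4) := Real.rpow_pos_of_pos hp0 _
  have h3' : 0 < 1 - (p:ℝ) ^ (-1-τ/4) := by linarith
  have h1le : 1 ≤ ((1 - (p:ℝ) ^ (-1 - τ/4))⁻¹) ^ 3 := by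
    apply one_le_pow₀
    rw [le_inv_comm₀ one_pos h3']
    simp only [inv_one]; linarith
  unfold pfac
  rw [if_neg (by tauto)]
  rw [sub_zero, inv_one, one_pow, mul_one]
  nth_rewrite 1 [← mul_one ((p:ℝ) ^ (((f p : ℤ) - (g p : ℤ)).natAbs))]
  exact mul_le_mul_of_nonneg_left h1le (pow_nonneg hp0.le _)

lemma prodP_pos {τ : ℝ} (hτ0 : 0 < τ) (G : GCDGraph) :
    0 < ∏ q ∈ G.P, pfac τ G.f G.g q :=
  Finset.prod_pos fun q hq => pfac_pos hτ0 (G.P_prime q hq) _ _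

lemma mem_exactPart_iff {S : Finset ℕ} (hS : ∀ v ∈ S, 0 < v) {p : ℕ} (hp : p.Prime)
    {a v : ℕ} (hv : v ∈ S) :
    v ∈ exactPart S p a ↔ v.factorization p = a := by
  simp only [exactPart, Finset.mem_filter, hv, true_and]
  rw [hp.pow_dvd_iff_le_factorization (hS v hv).ne',
    hp.pow_dvd_iff_le_factorization (hS v hv).ne']
  omega

lemma exactPart_eq_filter {S : Finset ℕ} (hS : ∀ v ∈ S, 0 < v) {p : ℕ} (hp : p.Prime)
    (a : ℕ) : exactPart S p a = S.filter (fun v => v.factorization p = a) := by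
  ext v
  by_cases hv : v ∈ S
  · rw [Finset.mem_filter, mem_exactPart_iff hS hp hv]
    simp [hv]
  · simp [exactPart, Finset.mem_filter, hv]

lemma factorization_lt_self {v p : ℕ} (hv : 0 < v) (hp : p.Prime) :
    v.factorization p < v := by
  have h1 : p ^ (v.factorization p) ≤ v := Nat.ordProj_le p hv.ne'
  have h2 : v.factorization p < 2 ^ (v.factorization p) := Nat.lt_two_pow_self
  have h3 : 2 ^ (v.factorization p) ≤ p ^ (v.factorization p) :=
    Nat.pow_le_pow_left hp.two_le _
  omega

lemma sum_muSet_exactPart (mu : ℕ → ℝ) {S : Finset ℕ} (hS : ∀ v ∈ S, 0 < v) {p : ℕ}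
    (hp : p.Prime) {N : ℕ} (hN : ∀ v ∈ S, v < N) :
    ∑ a ∈ Finset.range N, muSet mu (exactPart S p a) = muSet mu S := by
  classical
  have hmaps : ∀ v ∈ S, v.factorization p ∈ Finset.range N := fun v hv =>
    Finset.mem_range.mpr (lt_trans (factorization_lt_self (hS v hv) hp) (hN v hv))
  have key := Finset.sum_fiberwise_of_maps_to hmaps mu
  rw [muSet, ← key]
  refine Finset.sum_congr rfl fun a _ => ?_
  rw [exactPart_eq_filter hS hp a, muSet]

lemma val_ne_of_mem_primeFactors {p : ℕ} (hp : p.Prime) {v w : ℕ} (hv : 0 < v) (hw : 0 < w)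
    (hmem : p ∈ (v * w / Nat.gcd v w ^ 2).primeFactors) :
    v.factorization p ≠ w.factorization p := by
  intro heq
  have hdvd : Nat.gcd v w ^ 2 ∣ v * w := by
    rw [sq]; exact mul_dvd_mul (Nat.gcd_dvd_left v w) (Nat.gcd_dvd_right v w)
  obtain ⟨hp', hpd, hn0⟩ := Nat.mem_primeFactors.mp hmem
  have hg0 : Nat.gcd v w ≠ 0 := (Nat.gcd_pos_of_pos_left w hv).ne'
  have h1 : (v * w / Nat.gcd v w ^ 2).factorization p
      = (v * w).factorization p - (Nat.gcd v w ^ 2).factorization p := by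
    rw [Nat.factorization_div hdvd]; simp [Finsupp.tsub_apply]
  have h2 : (v * w).factorization p = v.factorization p + w.factorization p := by
    rw [Nat.factorization_mul hv.ne' hw.ne']; simp
  have h3 : (Nat.gcd v w ^ 2).factorization p
      = 2 * min (v.factorization p) (w.factorization p) := by
    rw [Nat.factorization_pow, Nat.factorization_gcd hv.ne' hw.ne']
    simp [Finsupp.inf_apply, min_def, mul_comm]
  have h4 : 1 ≤ (v * w / Nat.gcd v w ^ 2).factorization p :=
    (hp.pow_dvd_iff_le_factorization hn0).mp (by simpa [pow_one] using hpd)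
  omega


lemma geom_le {r : ℝ} (hr0 : 0 ≤ r) (hr1 : r ≤ 3/4) (n : ℕ) :
    ∑ j ∈ Finset.range n, r ^ j ≤ 4 := by
  have h := geom_sum_mul r n
  have hS0 : (0:ℝ) ≤ ∑ j ∈ Finset.range n, r ^ j :=
    Finset.sum_nonneg fun j _ => pow_nonneg hr0 j
  have hrn : (0:ℝ) ≤ r ^ n := pow_nonneg hr0 n
  nlinarith [mul_nonneg hS0 (by linarith : (0:ℝ) ≤ 3/4 - r)]

lemma geom_tail {r : ℝ} (hr0 : 0 ≤ r) (hr1 : r ≤ 3/4) (N a : ℕ) :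
    ∑ b ∈ (Finset.range N).erase a, r ^ (((a:ℤ) - b).natAbs) ≤ 8 * r := by
  classical
  have hsplit := Finset.sum_filter_add_sum_filter_not ((Finset.range N).erase a)
    (fun b => b < a) (fun b => r ^ (((a:ℤ) - b).natAbs))
  have h1 : ∑ b ∈ ((Finset.range N).erase a).filter (fun b => b < a),
      r ^ (((a:ℤ) - b).natAbs) ≤ 4 * r := by
    have e1 : ∑ b ∈ ((Finset.range N).erase a).filter (fun b => b < a),
        r ^ (((a:ℤ) - b).natAbs)
        = ∑ b ∈ ((Finset.range N).erase a).filter (fun b => b < a), r ^ (a - b) := by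
      refine Finset.sum_congr rfl fun b hb => ?_
      have hb' : b < a := (Finset.mem_filter.mp hb).2
      have : (((a:ℤ) - b).natAbs) = a - b := by omega
      rw [this]
    rw [e1]
    have h2 : ∑ b ∈ ((Finset.range N).erase a).filter (fun b => b < a), r ^ (a - b)
        ≤ ∑ b ∈ Finset.range a, r ^ (a - b) := by
      apply Finset.sum_le_sum_of_subset_of_nonneg
      · intro b hb
        exact Finset.mem_range.mpr (Finset.mem_filter.mp hb).2
      · intro b _ _; exact pow_nonneg hr0 _
    have h3 : ∑ b ∈ Finset.range a, r ^ (a - b) = ∑ j ∈ Finset.range a, r ^ (j+1) := by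
      rw [← Finset.sum_range_reflect (fun j => r ^ (j+1)) a]
      refine Finset.sum_congr rfl fun j hj => ?_
      have hj' : j < a := Finset.mem_range.mp hj
      congr 1; omega
    have h4 : ∑ j ∈ Finset.range a, r ^ (j+1) ≤ 4 * r := by
      have : ∑ j ∈ Finset.range a, r ^ (j+1) = (∑ j ∈ Finset.range a, r ^ j) * r := by
        rw [Finset.sum_mul]; exact Finset.sum_congr rfl fun j _ => (pow_succ r j)
      rw [this]
      exact mul_le_mul_of_nonneg_right (geom_le hr0 hr1 a) hr0
    linarith
  have h2 : ∑ b ∈ ((Finset.range N).erase a).filter (fun b => ¬ b < a),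
      r ^ (((a:ℤ) - b).natAbs) ≤ 4 * r := by
    have e1 : ∑ b ∈ ((Finset.range N).erase a).filter (fun b => ¬ b < a),
        r ^ (((a:ℤ) - b).natAbs)
        = ∑ b ∈ ((Finset.range N).erase a).filter (fun b => ¬ b < a), r ^ (b - a) := by
      refine Finset.sum_congr rfl fun b hb => ?_
      have hba : b ≠ a := Finset.ne_of_mem_erase (Finset.mem_filter.mp hb).1
      have hb' : ¬ b < a := (Finset.mem_filter.mp hb).2
      have : (((a:ℤ) - b).natAbs) = b - a := by omega
      rw [this]
    rw [e1]
    have h2' : ∑ b ∈ ((Finset.range N).erase a).filter (fun b => ¬ b < a), r ^ (b - a)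
        ≤ ∑ b ∈ Finset.Ico (a+1) N, r ^ (b - a) := by
      apply Finset.sum_le_sum_of_subset_of_nonneg
      · intro b hb
        have h := Finset.mem_filter.mp hb
        have hba : b ≠ a := Finset.ne_of_mem_erase h.1
        have hbN : b < N := Finset.mem_range.mp (Finset.mem_of_mem_erase h.1)
        exact Finset.mem_Ico.mpr ⟨by omega, hbN⟩
      · intro b _ _; exact pow_nonneg hr0 _
    have h3 : ∑ b ∈ Finset.Ico (a+1) N, r ^ (b - a) = ∑ j ∈ Finset.range (N - (a+1)), r ^ (j+1) := by
      rw [Finset.sum_Ico_eq_sum_range]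
      refine Finset.sum_congr rfl fun j _ => ?_
      congr 1; omega
    have h4 : ∑ j ∈ Finset.range (N-(a+1)), r ^ (j+1) ≤ 4 * r := by
      have : ∑ j ∈ Finset.range (N-(a+1)), r ^ (j+1)
          = (∑ j ∈ Finset.range (N-(a+1)), r ^ j) * r := by
        rw [Finset.sum_mul]; exact Finset.sum_congr rfl fun j _ => (pow_succ r j)
      rw [this]
      exact mul_le_mul_of_nonneg_right (geom_le hr0 hr1 _) hr0
    linarith
  linarith


lemma amgm_rpow {u v θ : ℝ} (hu : 0 ≤ u) (hv : 0 ≤ v) (hθ : 0 ≤ θ) :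
    (u * v) ^ θ ≤ (u ^ (2*θ) + v ^ (2*θ)) / 2 := by
  have hA : 0 ≤ u ^ (2*θ) := Real.rpow_nonneg hu _
  have hB : 0 ≤ v ^ (2*θ) := Real.rpow_nonneg hv _
  have e1 : (u*v) ^ θ = Real.sqrt (u ^ (2*θ) * v ^ (2*θ)) := by
    rw [← Real.mul_rpow hu hv, Real.sqrt_eq_rpow, ← Real.rpow_mul (mul_nonneg hu hv)]
    ring_nf
  rw [e1]
  have hs := Real.sq_sqrt (mul_nonneg hA hB)
  have hs0 := Real.sqrt_nonneg (u ^ (2*θ) * v ^ (2*θ))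
  nlinarith [sq_nonneg (u ^ (2*θ) - v ^ (2*θ)), sq_nonneg (Real.sqrt (u^(2*θ) * v^(2*θ)) - (u^(2*θ)+v^(2*θ))/2)]

lemma rpow_tail {u c θ : ℝ} (hu : 0 ≤ u) (huc : u ≤ c) (hθ : 1/2 ≤ θ) :
    u ^ (2*θ) ≤ u * c ^ (2*θ - 1) := by
  rcases eq_or_lt_of_le hu with h0 | h0
  · rw [← h0, Real.zero_rpow (by positivity : 2*θ ≠ 0), zero_mul]
  · have e : u ^ (2*θ) = u * u ^ (2*θ-1) := by
      have : u ^ (2*θ) = u ^ ((1:ℝ) + (2*θ-1)) := by ring_nf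
      rw [this, Real.rpow_add h0, Real.rpow_one]
    rw [e]
    have h2 := Real.rpow_le_rpow hu huc (by linarith : (0:ℝ) ≤ 2*θ - 1)
    nlinarith [Real.rpow_nonneg hu (2*θ-1)]

lemma mul_rpow_tail {c θ : ℝ} (hc : 0 ≤ c) (hθ : 1/2 ≤ θ) : c * c ^ (2*θ-1) = c ^ (2*θ) := by
  rcases eq_or_lt_of_le hc with h0 | h0
  · rw [← h0, Real.zero_rpow (by positivity : 2*θ ≠ 0), zero_mul]
  · nth_rewrite 1 [← Real.rpow_one c]
    rw [← Real.rpow_add h0]; ring_nf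


lemma pair_sum_bound (N k : ℕ) (x y : ℕ → ℝ) (hx0 : ∀ a, 0 ≤ x a) (hy0 : ∀ b, 0 ≤ y b)
    (hxk : x k ≤ 1) (hyk : y k ≤ 1) (c : ℝ) (hc0 : 0 ≤ c)
    (hxs : ∑ a ∈ (Finset.range N).erase k, x a ≤ c)
    (hys : ∑ b ∈ (Finset.range N).erase k, y b ≤ c)
    {r : ℝ} (hr0 : 0 ≤ r) (hr1 : r ≤ 3/4)
    {θ : ℝ} (hθ1 : 1/2 ≤ θ) (hθ2 : θ ≤ 1) :
    ∑ ab ∈ (Finset.range N ×ˢ Finset.range N).filter (fun ab => ab.1 ≠ ab.2),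
        (x ab.1 * y ab.2) ^ θ * r ^ (((ab.1 : ℤ) - ab.2).natAbs)
      ≤ 16 * (c ^ θ + c ^ (2 * θ)) * r := by
  classical
  set T := (Finset.range N ×ˢ Finset.range N).filter (fun ab : ℕ × ℕ => ab.1 ≠ ab.2) with hT
  set F : ℕ × ℕ → ℝ := fun ab => (x ab.1 * y ab.2) ^ θ * r ^ (((ab.1 : ℤ) - ab.2).natAbs)
    with hF
  have hF0 : ∀ ab, 0 ≤ F ab := fun ab =>
    mul_nonneg (Real.rpow_nonneg (mul_nonneg (hx0 _) (hy0 _)) _) (pow_nonneg hr0 _)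
  have hxa : ∀ a ∈ (Finset.range N).erase k, x a ≤ c := fun a ha =>
    le_trans (Finset.single_le_sum (fun i _ => hx0 i) ha) hxs
  have hya : ∀ b ∈ (Finset.range N).erase k, y b ≤ c := fun b hb =>
    le_trans (Finset.single_le_sum (fun i _ => hy0 i) hb) hys
  -- split
  have hsplit1 : ∑ ab ∈ T, F ab = ∑ ab ∈ T.filter (fun ab : ℕ × ℕ => ab.1 = k), F ab
      + ∑ ab ∈ T.filter (fun ab : ℕ × ℕ => ¬ ab.1 = k), F ab :=
    (Finset.sum_filter_add_sum_filter_not T (fun ab : ℕ × ℕ => ab.1 = k) F).symm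
  have hsplit2 : ∑ ab ∈ T.filter (fun ab : ℕ × ℕ => ¬ ab.1 = k), F ab
      = ∑ ab ∈ (T.filter (fun ab : ℕ × ℕ => ¬ ab.1 = k)).filter (fun ab : ℕ × ℕ => ab.2 = k), F ab
      + ∑ ab ∈ (T.filter (fun ab : ℕ × ℕ => ¬ ab.1 = k)).filter (fun ab : ℕ × ℕ => ¬ ab.2 = k), F ab :=
    (Finset.sum_filter_add_sum_filter_not _ (fun ab : ℕ × ℕ => ab.2 = k) F).symm
  -- S1
  have hS1 : ∑ ab ∈ T.filter (fun ab => ab.1 = k), F ab ≤ c ^ θ * (8 * r) := by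
    have hsub : T.filter (fun ab : ℕ × ℕ => ab.1 = k) ⊆ {k} ×ˢ ((Finset.range N).erase k) := by
      intro ab hab
      simp only [hT, Finset.mem_filter, Finset.mem_product, Finset.mem_singleton,
        Finset.mem_erase] at *
      simp only [Finset.mem_range] at hab ⊢
      omega
    calc ∑ ab ∈ T.filter (fun ab => ab.1 = k), F ab
        ≤ ∑ ab ∈ {k} ×ˢ ((Finset.range N).erase k), F ab :=
          Finset.sum_le_sum_of_subset_of_nonneg hsub (fun ab _ _ => hF0 ab)
      _ = ∑ b ∈ (Finset.range N).erase k, F (k, b) := by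
          rw [Finset.sum_product, Finset.sum_singleton]
      _ ≤ ∑ b ∈ (Finset.range N).erase k, c ^ θ * r ^ (((k:ℤ) - b).natAbs) := by
          refine Finset.sum_le_sum fun b hb => ?_
          refine mul_le_mul_of_nonneg_right ?_ (pow_nonneg hr0 _)
          refine Real.rpow_le_rpow (mul_nonneg (hx0 _) (hy0 _)) ?_ (by linarith)
          calc x k * y b ≤ 1 * c := mul_le_mul hxk (hya b hb) (hy0 b) zero_le_one
            _ = c := one_mul c
      _ = c ^ θ * ∑ b ∈ (Finset.range N).erase k, r ^ (((k:ℤ) - b).natAbs) := by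
          rw [Finset.mul_sum]
      _ ≤ c ^ θ * (8 * r) := by
          exact mul_le_mul_of_nonneg_left (geom_tail hr0 hr1 N k) (Real.rpow_nonneg hc0 θ)
  -- S2
  have hS2 : ∑ ab ∈ (T.filter (fun ab : ℕ × ℕ => ¬ ab.1 = k)).filter (fun ab => ab.2 = k), F ab
      ≤ c ^ θ * (8 * r) := by
    have hsub : (T.filter (fun ab : ℕ × ℕ => ¬ ab.1 = k)).filter (fun ab => ab.2 = k)
        ⊆ ((Finset.range N).erase k) ×ˢ {k} := by
      intro ab hab
      simp only [hT, Finset.mem_filter, Finset.mem_product, Finset.mem_singleton,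
        Finset.mem_erase] at *
      simp only [Finset.mem_range] at hab ⊢
      omega
    calc ∑ ab ∈ (T.filter (fun ab : ℕ × ℕ => ¬ ab.1 = k)).filter (fun ab => ab.2 = k), F ab
        ≤ ∑ ab ∈ ((Finset.range N).erase k) ×ˢ {k}, F ab :=
          Finset.sum_le_sum_of_subset_of_nonneg hsub (fun ab _ _ => hF0 ab)
      _ = ∑ a ∈ (Finset.range N).erase k, F (a, k) := by
          rw [Finset.sum_product]
          exact Finset.sum_congr rfl fun a _ => Finset.sum_singleton _ _
      _ ≤ ∑ a ∈ (Finset.range N).erase k, c ^ θ * r ^ (((k:ℤ) - a).natAbs) := by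
          refine Finset.sum_le_sum fun a ha => ?_
          have : (((a:ℤ) - k).natAbs) = (((k:ℤ) - a).natAbs) := by omega
          simp only [hF, this]
          refine mul_le_mul_of_nonneg_right ?_ (pow_nonneg hr0 _)
          refine Real.rpow_le_rpow (mul_nonneg (hx0 _) (hy0 _)) ?_ (by linarith)
          calc x a * y k ≤ c * 1 := mul_le_mul (hxa a ha) hyk (hy0 k) hc0
            _ = c := mul_one c
      _ = c ^ θ * ∑ b ∈ (Finset.range N).erase k, r ^ (((k:ℤ) - b).natAbs) := by
          rw [Finset.mul_sum]
      _ ≤ c ^ θ * (8 * r) :=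
          mul_le_mul_of_nonneg_left (geom_tail hr0 hr1 N k) (Real.rpow_nonneg hc0 θ)
  -- S3
  have hS3 : ∑ ab ∈ (T.filter (fun ab : ℕ × ℕ => ¬ ab.1 = k)).filter (fun ab => ¬ ab.2 = k), F ab
      ≤ c ^ (2*θ) * (8 * r) := by
    set T3 := (T.filter (fun ab : ℕ × ℕ => ¬ ab.1 = k)).filter (fun ab => ¬ ab.2 = k) with hT3
    have hXpart : ∑ ab ∈ T3, x ab.1 ^ (2*θ) * r ^ (((ab.1:ℤ) - ab.2).natAbs)
        ≤ c ^ (2*θ) * (8*r) := by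
      have hsub : T3 ⊆ ((Finset.range N).erase k) ×ˢ (Finset.range N) := by
        intro ab hab
        simp only [hT3, hT, Finset.mem_filter, Finset.mem_product, Finset.mem_erase] at *
        simp only [Finset.mem_range] at hab ⊢
        omega
      calc ∑ ab ∈ T3, x ab.1 ^ (2*θ) * r ^ (((ab.1:ℤ) - ab.2).natAbs)
          ≤ ∑ ab ∈ ((Finset.range N).erase k) ×ˢ (Finset.range N),
              (if ab.1 = ab.2 then 0 else x ab.1 ^ (2*θ) * r ^ (((ab.1:ℤ) - ab.2).natAbs)) := by
            rw [show ∑ ab ∈ T3, x ab.1 ^ (2*θ) * r ^ (((ab.1:ℤ) - ab.2).natAbs)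
                = ∑ ab ∈ T3, (if ab.1 = ab.2 then 0
                    else x ab.1 ^ (2*θ) * r ^ (((ab.1:ℤ) - ab.2).natAbs)) from
              Finset.sum_congr rfl fun ab hab => by
                have : ab.1 ≠ ab.2 := by
                  simp only [hT3, hT, Finset.mem_filter] at hab
                  tauto
                rw [if_neg this]]
            refine Finset.sum_le_sum_of_subset_of_nonneg hsub fun ab _ _ => ?_
            split
            · exact le_refl 0
            · exact mul_nonneg (Real.rpow_nonneg (hx0 _) _) (pow_nonneg hr0 _)
        _ = ∑ a ∈ (Finset.range N).erase k, x a ^ (2*θ)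
              * ∑ b ∈ (Finset.range N).erase a, r ^ (((a:ℤ) - b).natAbs) := by
            rw [Finset.sum_product]
            refine Finset.sum_congr rfl fun a _ => ?_
            rw [Finset.mul_sum]
            rw [← Finset.sum_erase (Finset.range N)
              (f := fun b => if a = b then 0 else x a ^ (2*θ) * r ^ (((a:ℤ) - b).natAbs))
              (if_pos rfl)]
            refine Finset.sum_congr rfl fun b hb => ?_
            rw [if_neg (Finset.ne_of_mem_erase hb).symm]
        _ ≤ ∑ a ∈ (Finset.range N).erase k, x a ^ (2*θ) * (8*r) := by
            refine Finset.sum_le_sum fun a _ => ?_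
            exact mul_le_mul_of_nonneg_left (geom_tail hr0 hr1 N a) (Real.rpow_nonneg (hx0 _) _)
        _ = (∑ a ∈ (Finset.range N).erase k, x a ^ (2*θ)) * (8*r) := by
            rw [Finset.sum_mul]
        _ ≤ c ^ (2*θ) * (8*r) := by
            refine mul_le_mul_of_nonneg_right ?_ (by linarith)
            calc ∑ a ∈ (Finset.range N).erase k, x a ^ (2*θ)
                ≤ ∑ a ∈ (Finset.range N).erase k, x a * c ^ (2*θ-1) :=
                  Finset.sum_le_sum fun a ha => rpow_tail (hx0 a) (hxa a ha) hθ1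
              _ = (∑ a ∈ (Finset.range N).erase k, x a) * c ^ (2*θ-1) := by
                  rw [Finset.sum_mul]
              _ ≤ c * c ^ (2*θ-1) :=
                  mul_le_mul_of_nonneg_right hxs (Real.rpow_nonneg hc0 _)
              _ = c ^ (2*θ) := mul_rpow_tail hc0 hθ1
    have hYpart : ∑ ab ∈ T3, y ab.2 ^ (2*θ) * r ^ (((ab.1:ℤ) - ab.2).natAbs)
        ≤ c ^ (2*θ) * (8*r) := by
      have hsub : T3 ⊆ (Finset.range N) ×ˢ ((Finset.range N).erase k) := by
        intro ab hab
        simp only [hT3, hT, Finset.mem_filter, Finset.mem_product, Finset.mem_erase] at *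
        simp only [Finset.mem_range] at hab ⊢
        omega
      calc ∑ ab ∈ T3, y ab.2 ^ (2*θ) * r ^ (((ab.1:ℤ) - ab.2).natAbs)
          ≤ ∑ ab ∈ (Finset.range N) ×ˢ ((Finset.range N).erase k),
              (if ab.1 = ab.2 then 0 else y ab.2 ^ (2*θ) * r ^ (((ab.1:ℤ) - ab.2).natAbs)) := by
            rw [show ∑ ab ∈ T3, y ab.2 ^ (2*θ) * r ^ (((ab.1:ℤ) - ab.2).natAbs)
                = ∑ ab ∈ T3, (if ab.1 = ab.2 then 0
                    else y ab.2 ^ (2*θ) * r ^ (((ab.1:ℤ) - ab.2).natAbs)) from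
              Finset.sum_congr rfl fun ab hab => by
                have : ab.1 ≠ ab.2 := by
                  simp only [hT3, hT, Finset.mem_filter] at hab
                  tauto
                rw [if_neg this]]
            refine Finset.sum_le_sum_of_subset_of_nonneg hsub fun ab _ _ => ?_
            split
            · exact le_refl 0
            · exact mul_nonneg (Real.rpow_nonneg (hy0 _) _) (pow_nonneg hr0 _)
        _ = ∑ b ∈ (Finset.range N).erase k, y b ^ (2*θ)
              * ∑ a ∈ (Finset.range N).erase b, r ^ (((b:ℤ) - a).natAbs) := by
            rw [Finset.sum_product_right]
            refine Finset.sum_congr rfl fun b _ => ?_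
            rw [Finset.mul_sum]
            rw [← Finset.sum_erase (Finset.range N)
              (f := fun a => if a = b then 0 else y b ^ (2*θ) * r ^ (((a:ℤ) - b).natAbs))
              (if_pos rfl)]
            refine Finset.sum_congr rfl fun a ha => ?_
            rw [if_neg (Finset.ne_of_mem_erase ha)]
            congr 2
            omega
        _ ≤ ∑ b ∈ (Finset.range N).erase k, y b ^ (2*θ) * (8*r) := by
            refine Finset.sum_le_sum fun b _ => ?_
            exact mul_le_mul_of_nonneg_left (geom_tail hr0 hr1 N b) (Real.rpow_nonneg (hy0 _) _)
        _ = (∑ b ∈ (Finset.range N).erase k, y b ^ (2*θ)) * (8*r) := by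
            rw [Finset.sum_mul]
        _ ≤ c ^ (2*θ) * (8*r) := by
            refine mul_le_mul_of_nonneg_right ?_ (by linarith)
            calc ∑ b ∈ (Finset.range N).erase k, y b ^ (2*θ)
                ≤ ∑ b ∈ (Finset.range N).erase k, y b * c ^ (2*θ-1) :=
                  Finset.sum_le_sum fun b hb => rpow_tail (hy0 b) (hya b hb) hθ1
              _ = (∑ b ∈ (Finset.range N).erase k, y b) * c ^ (2*θ-1) := by
                  rw [Finset.sum_mul]
              _ ≤ c * c ^ (2*θ-1) :=
                  mul_le_mul_of_nonneg_right hys (Real.rpow_nonneg hc0 _)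
              _ = c ^ (2*θ) := mul_rpow_tail hc0 hθ1
    calc ∑ ab ∈ T3, F ab
        ≤ ∑ ab ∈ T3, ((x ab.1 ^ (2*θ) * r ^ (((ab.1:ℤ) - ab.2).natAbs))
            + (y ab.2 ^ (2*θ) * r ^ (((ab.1:ℤ) - ab.2).natAbs))) / 2 := by
          refine Finset.sum_le_sum fun ab _ => ?_
          have h := amgm_rpow (hx0 ab.1) (hy0 ab.2) (by linarith : (0:ℝ) ≤ θ)
          have hrp : (0:ℝ) ≤ r ^ (((ab.1:ℤ) - ab.2).natAbs) := pow_nonneg hr0 _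
          calc F ab = (x ab.1 * y ab.2) ^ θ * r ^ (((ab.1:ℤ) - ab.2).natAbs) := rfl
            _ ≤ ((x ab.1 ^ (2*θ) + y ab.2 ^ (2*θ)) / 2) * r ^ (((ab.1:ℤ) - ab.2).natAbs) :=
                mul_le_mul_of_nonneg_right h hrp
            _ = ((x ab.1 ^ (2*θ) * r ^ (((ab.1:ℤ) - ab.2).natAbs))
                + (y ab.2 ^ (2*θ) * r ^ (((ab.1:ℤ) - ab.2).natAbs))) / 2 := by ring
      _ = ((∑ ab ∈ T3, x ab.1 ^ (2*θ) * r ^ (((ab.1:ℤ) - ab.2).natAbs))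
            + (∑ ab ∈ T3, y ab.2 ^ (2*θ) * r ^ (((ab.1:ℤ) - ab.2).natAbs))) / 2 := by
          rw [← Finset.sum_add_distrib, ← Finset.sum_div]
      _ ≤ (c ^ (2*θ) * (8*r) + c ^ (2*θ) * (8*r)) / 2 := by
          gcongr
      _ = c ^ (2*θ) * (8 * r) := by ring
  have hcθ : 0 ≤ c ^ θ := Real.rpow_nonneg hc0 θ
  have hc2θ : 0 ≤ c ^ (2*θ) := Real.rpow_nonneg hc0 _
  have htot : ∑ ab ∈ T, F ab ≤ 16 * (c ^ θ + c ^ (2 * θ)) * r := by nlinarith [mul_nonneg hcθ hr0, mul_nonneg hc2θ hr0]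
  exact htot

lemma pair_bound (τ M : ℝ) (hτ0 : 0 < τ) (hM1 : 1 ≤ M) (G : GCDGraph)
    (hZ1 : 0 < muSet G.mu G.V) (hZ2 : 0 < muSet G.mu G.W)
    {p : ℕ} (hp : p.Prime) (hpP : p ∉ G.P) {a b : ℕ} (hab : a ≠ b)
    (hq : qualityAt τ G p a b < M * quality τ G) :
    muEdges G.mu (edgesAt G p a b) ≤
      M * muEdges G.mu G.E *
        ((muSet G.mu (exactPart G.V p a) / muSet G.mu G.V) *
          (muSet G.mu (exactPart G.W p b) / muSet G.mu G.W)) ^ ((1 + τ) / (2 + τ)) *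
        ((p : ℝ) ^ (-(1 / (2 + τ)))) ^ (((a : ℤ) - b).natAbs) := by
  classical
  have hμ := G.mu_nonneg
  set A := muSet G.mu (exactPart G.V p a) with hA
  set B := muSet G.mu (exactPart G.W p b) with hB
  set Z1 := muSet G.mu G.V with hZ1d
  set Z2 := muSet G.mu G.W with hZ2d
  set EE := muEdges G.mu G.E with hEE
  set Eab := muEdges G.mu (edgesAt G p a b) with hEab
  set J := (((a : ℤ) - b).natAbs) with hJ
  have hp0 : (0:ℝ) < p := by exact_mod_cast hp.pos
  have hA0 : 0 ≤ A := muSet_nonneg _ hμ _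
  have hB0 : 0 ≤ B := muSet_nonneg _ hμ _
  have hE0 : 0 ≤ EE := muEdges_nonneg _ hμ _
  have hEab0 : 0 ≤ Eab := muEdges_nonneg _ hμ _
  have hM0 : (0:ℝ) ≤ M := by linarith
  have hPJ : (0:ℝ) < (p:ℝ) ^ J := pow_pos hp0 J
  set PP := ∏ q ∈ G.P, pfac τ G.f G.g q with hPP
  have hPP0 : 0 < PP := prodP_pos hτ0 G
  set f' := Function.update G.f p a with hf'
  set g' := Function.update G.g p b with hg'
  have hf'p : f' p = a := Function.update_self p a G.f
  have hg'p : g' p = b := Function.update_self p b G.g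
  set d := densityRaw G.mu (exactPart G.V p a) (exactPart G.W p b) (edgesAt G p a b) with hdd
  have hd0 : 0 ≤ d := div_nonneg (muEdges_nonneg _ hμ _) (mul_nonneg hA0 hB0)
  have hd2 : 0 ≤ d ^ ((2:ℝ)+τ) := Real.rpow_nonneg hd0 _
  have hD0 : 0 ≤ G.density :=
    div_nonneg hE0 (mul_nonneg hZ1.le hZ2.le)
  -- key inequality from quality comparison
  have hq2 : d ^ ((2:ℝ)+τ) * A * B * (p:ℝ) ^ J ≤ M * (G.density ^ ((2:ℝ)+τ) * Z1 * Z2) := by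
    have hins : ∏ q ∈ insert p G.P, pfac τ f' g' q = pfac τ f' g' p * PP := by
      rw [Finset.prod_insert hpP]
      congr 1
      refine Finset.prod_congr rfl fun q hqP => ?_
      have hqp : q ≠ p := fun h => hpP (h ▸ hqP)
      unfold pfac
      rw [hf', hg', Function.update_of_ne hqp, Function.update_of_ne hqp]
    have e1 : qualityAt τ G p a b = d ^ ((2:ℝ)+τ) * A * B * (pfac τ f' g' p * PP) := by
      simp only [qualityAt, qualityRaw_eq]
      rw [hins]
    have e2 : M * quality τ G = M * (G.density ^ ((2:ℝ)+τ) * Z1 * Z2 * PP) := by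
      rw [quality, qualityRaw_eq]
      rfl
    have hpf : (p:ℝ) ^ J ≤ pfac τ f' g' p := by
      have hne : f' p ≠ g' p := by rw [hf'p, hg'p]; exact hab
      have := pfac_ge hτ0 hp hne
      rwa [hf'p, hg'p] at this
    have c1 : d ^ ((2:ℝ)+τ) * A * B * ((p:ℝ) ^ J * PP)
        ≤ d ^ ((2:ℝ)+τ) * A * B * (pfac τ f' g' p * PP) := by
      refine mul_le_mul_of_nonneg_left (mul_le_mul_of_nonneg_right hpf hPP0.le) ?_
      exact mul_nonneg (mul_nonneg hd2 hA0) hB0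
    rw [e1, e2] at hq
    have c3 : d ^ ((2:ℝ)+τ) * A * B * ((p:ℝ) ^ J * PP)
        ≤ M * (G.density ^ ((2:ℝ)+τ) * Z1 * Z2 * PP) := le_of_lt (lt_of_le_of_lt c1 hq)
    have c4 : (d ^ ((2:ℝ)+τ) * A * B * (p:ℝ) ^ J) * PP
        ≤ (M * (G.density ^ ((2:ℝ)+τ) * Z1 * Z2)) * PP := by
      calc (d ^ ((2:ℝ)+τ) * A * B * (p:ℝ) ^ J) * PP
          = d ^ ((2:ℝ)+τ) * A * B * ((p:ℝ) ^ J * PP) := by ring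
        _ ≤ M * (G.density ^ ((2:ℝ)+τ) * Z1 * Z2 * PP) := c3
        _ = (M * (G.density ^ ((2:ℝ)+τ) * Z1 * Z2)) * PP := by ring
    exact le_of_mul_le_mul_right c4 hPP0
  -- edges bounded by product measure
  have hEabAB : Eab ≤ A * B := by
    refine muEdges_le_mul G.mu hμ (fun e he => ?_)
    simp only [edgesAt, Finset.mem_filter] at he
    exact Finset.mem_product.mpr ⟨he.2.1, he.2.2⟩
  set θ := (1+τ)/(2+τ) with hθd
  set rp := (p:ℝ) ^ (-(1/(2+τ))) with hrpd
  have hrp0 : 0 ≤ rp := Real.rpow_nonneg hp0.le _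
  set X := (A/Z1) * (B/Z2) with hX
  have hX0 : 0 ≤ X := by positivity
  have hRHS0 : 0 ≤ M * EE * X ^ θ * rp ^ J := by positivity
  rcases eq_or_lt_of_le (mul_nonneg hA0 hB0) with hAB0 | hAB0
  · exact le_trans (hEabAB.trans (le_of_eq hAB0.symm)) hRHS0
  · have hA' : 0 < A := by
      rcases eq_or_lt_of_le hA0 with h | h
      · exfalso; rw [← h, zero_mul] at hAB0; exact lt_irrefl _ hAB0
      · exact h
    have hB' : 0 < B := by
      rcases eq_or_lt_of_le hB0 with h | h
      · exfalso; rw [← h, mul_zero] at hAB0; exact lt_irrefl _ hAB0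
      · exact h
    have hd : Eab = d * (A*B) := by
      rw [hdd, densityRaw, ← hA, ← hB, ← hEab]
      field_simp
    have hEEeq : EE = G.density * (Z1 * Z2) := by
      rw [GCDGraph.density, densityRaw, ← hZ1d, ← hZ2d, ← hEE]
      field_simp
    have hτ2 : (0:ℝ) < 2 + τ := by linarith
    -- expansions
    have hsum1 : ((2:ℝ)+τ) = 1 + (1+τ) := by ring
    have hABe : (A*B) ^ ((2:ℝ)+τ) = (A*B) * (A*B) ^ ((1:ℝ)+τ) := by
      rw [hsum1, Real.rpow_add hAB0, Real.rpow_one]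
    have hZZ0 : (0:ℝ) < Z1*Z2 := mul_pos hZ1 hZ2
    have hθe : θ * (2+τ) = 1+τ := by rw [hθd]; field_simp
    have hrpJe : ((rp ^ J : ℝ)) ^ ((2:ℝ)+τ) = ((p:ℝ) ^ J)⁻¹ := by
      rw [hrpd, ← Real.rpow_natCast ((p:ℝ) ^ (-(1/(2+τ)))) J, ← Real.rpow_mul hp0.le,
        ← Real.rpow_mul hp0.le]
      rw [show (-(1/(2+τ)) * (J:ℝ)) * (2+τ) = -(J:ℝ) by field_simp]
      rw [Real.rpow_neg hp0.le, Real.rpow_natCast]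
    have hLHSexp : (d * (A*B)) ^ ((2:ℝ)+τ)
        = d ^ ((2:ℝ)+τ) * ((A*B) * (A*B) ^ ((1:ℝ)+τ)) := by
      rw [Real.mul_rpow hd0 hAB0.le, hABe]
    have hRHSexp : (M * EE * X ^ θ * rp ^ J) ^ ((2:ℝ)+τ)
        = M ^ ((2:ℝ)+τ) * (G.density ^ ((2:ℝ)+τ) * Z1 * Z2) * (A*B) ^ ((1:ℝ)+τ)
            * ((p:ℝ) ^ J)⁻¹ := by
      have hXalt : X = (A*B)/(Z1*Z2) := div_mul_div_comm A Z1 B Z2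
      have hZZe : (Z1*Z2) ^ ((2:ℝ)+τ) = (Z1*Z2) * (Z1*Z2) ^ ((1:ℝ)+τ) := by
        rw [hsum1, Real.rpow_add hZZ0, Real.rpow_one]
      have hZZ1τ : (0:ℝ) < (Z1*Z2) ^ ((1:ℝ)+τ) := Real.rpow_pos_of_pos hZZ0 _
      rw [Real.mul_rpow (by positivity) (pow_nonneg hrp0 J),
        Real.mul_rpow (by positivity) (Real.rpow_nonneg hX0 θ),
        Real.mul_rpow hM0 hE0, hrpJe, ← Real.rpow_mul hX0, hθe, hEEeq,
        Real.mul_rpow hD0 hZZ0.le, hXalt, Real.div_rpow hAB0.le hZZ0.le, hZZe]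
      field_simp
    -- final comparison
    have hm : M ≤ M ^ ((2:ℝ)+τ) := by
      nth_rewrite 1 [← Real.rpow_one M]
      exact Real.rpow_le_rpow_of_exponent_le hM1 (by linarith)
    have hAB1τ : (0:ℝ) ≤ (A*B) ^ ((1:ℝ)+τ) := Real.rpow_nonneg hAB0.le _
    have hstep := mul_le_mul_of_nonneg_right hq2
      (mul_nonneg hAB1τ (inv_nonneg.mpr hPJ.le))
    have hL : d ^ ((2:ℝ)+τ) * A * B * (p:ℝ) ^ J * ((A*B) ^ ((1:ℝ)+τ) * ((p:ℝ) ^ J)⁻¹)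
        = d ^ ((2:ℝ)+τ) * ((A*B) * (A*B) ^ ((1:ℝ)+τ)) := by
      field_simp
    have hDZZ : (0:ℝ) ≤ (G.density ^ ((2:ℝ)+τ) * Z1 * Z2) * ((A*B) ^ ((1:ℝ)+τ) * ((p:ℝ) ^ J)⁻¹) :=
      mul_nonneg (mul_nonneg (mul_nonneg (Real.rpow_nonneg hD0 _) hZ1.le) hZ2.le)
        (mul_nonneg hAB1τ (inv_nonneg.mpr hPJ.le))
    have hR : M * (G.density ^ ((2:ℝ)+τ) * Z1 * Z2) * ((A*B) ^ ((1:ℝ)+τ) * ((p:ℝ) ^ J)⁻¹)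
        ≤ M ^ ((2:ℝ)+τ) * (G.density ^ ((2:ℝ)+τ) * Z1 * Z2) * (A*B) ^ ((1:ℝ)+τ)
          * ((p:ℝ) ^ J)⁻¹ := by
      have h0 := mul_le_mul_of_nonneg_right hm hDZZ
      calc M * (G.density ^ ((2:ℝ)+τ) * Z1 * Z2) * ((A*B) ^ ((1:ℝ)+τ) * ((p:ℝ) ^ J)⁻¹)
          = M * ((G.density ^ ((2:ℝ)+τ) * Z1 * Z2) * ((A*B) ^ ((1:ℝ)+τ) * ((p:ℝ) ^ J)⁻¹)) := by
            ring
        _ ≤ M ^ ((2:ℝ)+τ) * ((G.density ^ ((2:ℝ)+τ) * Z1 * Z2) * ((A*B) ^ ((1:ℝ)+τ) * ((p:ℝ) ^ J)⁻¹)) := h0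
        _ = M ^ ((2:ℝ)+τ) * (G.density ^ ((2:ℝ)+τ) * Z1 * Z2) * (A*B) ^ ((1:ℝ)+τ)
            * ((p:ℝ) ^ J)⁻¹ := by ring
    have hcomp : (d * (A*B)) ^ ((2:ℝ)+τ) ≤ (M * EE * X ^ θ * rp ^ J) ^ ((2:ℝ)+τ) := by
      rw [hLHSexp, hRHSexp]
      calc d ^ ((2:ℝ)+τ) * ((A*B) * (A*B) ^ ((1:ℝ)+τ))
          = d ^ ((2:ℝ)+τ) * A * B * (p:ℝ) ^ J * ((A*B) ^ ((1:ℝ)+τ) * ((p:ℝ) ^ J)⁻¹) := by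
            rw [hL]
        _ ≤ M * (G.density ^ ((2:ℝ)+τ) * Z1 * Z2) * ((A*B) ^ ((1:ℝ)+τ) * ((p:ℝ) ^ J)⁻¹) := hstep
        _ ≤ M ^ ((2:ℝ)+τ) * (G.density ^ ((2:ℝ)+τ) * Z1 * Z2) * (A*B) ^ ((1:ℝ)+τ)
            * ((p:ℝ) ^ J)⁻¹ := hR
    have hfin : d * (A*B) ≤ M * EE * X ^ θ * rp ^ J := by
      by_contra hcon
      push_neg at hcon
      have := Real.rpow_lt_rpow hRHS0 hcon (by linarith : (0:ℝ) < 2+τ)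
      linarith [hcomp]
    rw [hd]
    exact hfin
end CosAux

namespace CosAux
open GCDGraph

lemma C1_ge {τ : ℝ} (hτ0 : 0 < τ) (hτ1 : τ < 1/100) : (10:ℝ)^6 ≤ C1 τ := by
  rw [C1, le_div_iff₀ hτ0]; nlinarith

lemma C2_ge {τ M : ℝ} (hτ0 : 0 < τ) (hτ1 : τ < 1/100) (hM : 2 ≤ M) :
    (10:ℝ)^19 ≤ C2 τ M := by
  have h1 := C1_ge hτ0 hτ1
  have h13 : ((10:ℝ)^6)^3 ≤ C1 τ ^ 3 := pow_le_pow_left₀ (by norm_num) h1 3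
  rw [C2]; nlinarith

lemma C2_two {τ M : ℝ} (hτ0 : 0 < τ) (hτ1 : τ < 1/100) (hM : 2 ≤ M) : 2 ≤ C2 τ M := by
  have := C2_ge hτ0 hτ1 hM; nlinarith

lemma C2_le_C6 {τ M : ℝ} (hτ0 : 0 < τ) (hτ1 : τ < 1/100) (hM : 2 ≤ M) :
    C2 τ M ≤ C6 τ M := by
  have h1 : 10^4 * M * C2 τ M ≤ C6 τ M :=
    le_trans (le_max_left _ _) (le_max_right _ _)
  have h2 := C2_two hτ0 hτ1 hM
  nlinarith

lemma C4_le_C6 {τ M : ℝ} : C4 τ M ≤ C6 τ M := le_max_left _ _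

lemma C6_big {τ M : ℝ} (hτ0 : 0 < τ) (hτ1 : τ < 1/100) (hM : 2 ≤ M) :
    3200 * M * C2 τ M ^ 2 ≤ C6 τ M := by
  refine le_trans ?_ (C4_le_C6 (τ := τ) (M := M))
  rw [C4]
  have h3 : (3200:ℝ)*M ≤ 10^10*M^2 := by nlinarith
  have h4 := mul_le_mul_of_nonneg_right h3 (sq_nonneg (C2 τ M))
  nlinarith [h4]

lemma C6_ge_30 {τ M : ℝ} (hτ0 : 0 < τ) (hτ1 : τ < 1/100) (hM : 2 ≤ M) :
    30 ≤ C6 τ M := by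
  have := C6_big hτ0 hτ1 hM
  have h2 := C2_two hτ0 hτ1 hM
  nlinarith

lemma rp_le_34 {τ : ℝ} (hτ0 : 0 < τ) (hτ1 : τ < 1/100) {p : ℕ} (hp : 2 ≤ p) :
    ((p:ℝ)) ^ (-(1/(2+τ))) ≤ 3/4 := by
  have hp1 : (2:ℝ) ≤ p := by exact_mod_cast hp
  have hppos : (0:ℝ) < p := by linarith
  have hτ2 : (0:ℝ) < 2 + τ := by linarith
  have h43 : (4/3 : ℝ) ≤ (2:ℝ) ^ ((9:ℝ)/20) := by
    by_contra hcon
    push_neg at hcon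
    have h20 : ((2:ℝ) ^ ((9:ℝ)/20)) ^ (20:ℕ) < ((4:ℝ)/3) ^ (20:ℕ) :=
      pow_lt_pow_left₀ hcon (Real.rpow_nonneg (by norm_num) _) (by norm_num)
    rw [← Real.rpow_natCast ((2:ℝ) ^ ((9:ℝ)/20)) 20, ← Real.rpow_mul (by norm_num)] at h20
    norm_num at h20
  have hexp : (9:ℝ)/20 ≤ 1/(2+τ) := by
    rw [div_le_div_iff₀ (by norm_num) hτ2]; linarith
  have h2 : (4/3 : ℝ) ≤ (p:ℝ) ^ (1/(2+τ)) := by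
    calc (4/3 : ℝ) ≤ (2:ℝ) ^ ((9:ℝ)/20) := h43
      _ ≤ (2:ℝ) ^ (1/(2+τ)) := Real.rpow_le_rpow_of_exponent_le one_le_two hexp
      _ ≤ (p:ℝ) ^ (1/(2+τ)) := Real.rpow_le_rpow (by norm_num) hp1 (by positivity)
  rw [Real.rpow_neg hppos.le]
  calc ((p:ℝ) ^ (1/(2+τ)))⁻¹ ≤ ((4:ℝ)/3)⁻¹ := by
        apply inv_anti₀ (by norm_num) h2
    _ = 3/4 := by norm_num


lemma per_prime (τ M : ℝ) (hτ0 : 0 < τ) (hτ1 : τ < 1/100) (hM : 2 ≤ M) (G : GCDGraph)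
    (hZ1 : 0 < muSet G.mu G.V) (hZ2 : 0 < muSet G.mu G.W)
    {p : ℕ} (hp : p.Prime) (hpC6 : C6 τ M < (p:ℝ))
    (hsharp : p ∈ Rsharp τ M G) :
    muEdges G.mu (G.E.filter fun e => p ∈ (e.1 * e.2 / Nat.gcd e.1 e.2 ^ 2).primeFactors)
      ≤ 32 * M * C2 τ M ^ 2 / p * muEdges G.mu G.E := by
  classical
  obtain ⟨hpR, ⟨k, hVk, hWk⟩, hqlt⟩ := hsharp
  have hpP : p ∉ G.P := hpR.2.1
  have hμ := G.mu_nonneg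
  have hM0 : (0:ℝ) ≤ M := by linarith
  have hE0 : 0 ≤ muEdges G.mu G.E := muEdges_nonneg _ hμ _
  have hC2two := C2_two hτ0 hτ1 hM
  have hC20 : (0:ℝ) < C2 τ M := by linarith
  have hC21 : (1:ℝ) ≤ C2 τ M := by linarith
  have hC2C6 := C2_le_C6 hτ0 hτ1 hM
  have hp2 : (2:ℕ) ≤ p := hp.two_le
  have hp0 : (0:ℝ) < p := by exact_mod_cast hp.pos
  have hp1 : (1:ℝ) ≤ p := by exact_mod_cast hp.one_le
  have hpC2 : C2 τ M < (p:ℝ) := lt_of_le_of_lt hC2C6 hpC6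
  have hτ2 : (0:ℝ) < 2 + τ := by linarith
  set c := C2 τ M / p with hc
  have hc0 : 0 ≤ c := div_nonneg hC20.le hp0.le
  set θ := (1+τ)/(2+τ) with hθd
  set rp := (p:ℝ) ^ (-(1/(2+τ))) with hrpd
  have hθ1 : 1/2 ≤ θ := by rw [hθd, le_div_iff₀ hτ2]; linarith
  have hθ2 : θ ≤ 1 := by rw [hθd, div_le_one hτ2]; linarith
  have hrp0 : 0 ≤ rp := Real.rpow_nonneg hp0.le _
  have hrp34 : rp ≤ 3/4 := rp_le_34 hτ0 hτ1 hp2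
  set N := G.V.sup id + G.W.sup id + 1 with hN
  have hVN : ∀ v ∈ G.V, v < N := by
    intro v hv
    have : id v ≤ G.V.sup id := Finset.le_sup hv
    simp only [id] at this; omega
  have hWN : ∀ w ∈ G.W, w < N := by
    intro w hw
    have : id w ≤ G.W.sup id := Finset.le_sup hw
    simp only [id] at this; omega
  set x := fun a : ℕ => muSet G.mu (exactPart G.V p a) / muSet G.mu G.V with hx
  set y := fun b : ℕ => muSet G.mu (exactPart G.W p b) / muSet G.mu G.W with hy
  have hx0 : ∀ a, 0 ≤ x a := fun a => div_nonneg (muSet_nonneg _ hμ _) hZ1.le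
  have hy0 : ∀ b, 0 ≤ y b := fun b => div_nonneg (muSet_nonneg _ hμ _) hZ2.le
  have hxsum : ∑ a ∈ Finset.range N, muSet G.mu (exactPart G.V p a) = muSet G.mu G.V :=
    sum_muSet_exactPart G.mu G.V_pos hp hVN
  have hysum : ∑ b ∈ Finset.range N, muSet G.mu (exactPart G.W p b) = muSet G.mu G.W :=
    sum_muSet_exactPart G.mu G.W_pos hp hWN
  have hcc : C2 τ M / p < 1 := by rw [div_lt_one hp0]; exact hpC2
  have hkV : 0 < muSet G.mu (exactPart G.V p k) := by
    have h1 : (1 - C2 τ M / p) * muSet G.mu G.V ≤ muSet G.mu (exactPart G.V p k) :=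
      (le_div_iff₀ hZ1).mp hVk
    nlinarith [mul_pos (by linarith : (0:ℝ) < 1 - C2 τ M / p) hZ1]
  have hkN : k < N := by
    by_contra hcon
    push_neg at hcon
    have hne : (exactPart G.V p k).Nonempty := by
      by_contra hem
      rw [Finset.not_nonempty_iff_eq_empty] at hem
      rw [hem] at hkV
      simp [muSet] at hkV
    obtain ⟨v, hv⟩ := hne
    simp only [exactPart, Finset.mem_filter] at hv
    have hvpos : 0 < v := G.V_pos v hv.1
    have hle : p ^ k ≤ v := Nat.le_of_dvd hvpos hv.2.1
    have h2k : k < 2 ^ k := Nat.lt_two_pow_self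
    have h2p : 2 ^ k ≤ p ^ k := Nat.pow_le_pow_left hp.two_le k
    have := hVN v hv.1
    omega
  have hxk : x k ≤ 1 := by
    rw [hx]
    exact div_le_one_of_le₀ (muSet_mono _ hμ (Finset.filter_subset _ _)) hZ1.le
  have hyk : y k ≤ 1 := by
    rw [hy]
    exact div_le_one_of_le₀ (muSet_mono _ hμ (Finset.filter_subset _ _)) hZ2.le
  have hxtail : ∑ a ∈ (Finset.range N).erase k, x a ≤ c := by
    have e0 := Finset.add_sum_erase (Finset.range N)
      (fun a => muSet G.mu (exactPart G.V p a)) (Finset.mem_range.mpr hkN)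
    rw [hxsum] at e0
    have e1 : ∑ a ∈ (Finset.range N).erase k, x a
        = (∑ a ∈ (Finset.range N).erase k, muSet G.mu (exactPart G.V p a)) / muSet G.mu G.V := by
      rw [Finset.sum_div]
    rw [e1]
    rw [div_le_iff₀ hZ1]
    have h2 : (1 - C2 τ M / p) * muSet G.mu G.V ≤ muSet G.mu (exactPart G.V p k) :=
      (le_div_iff₀ hZ1).mp hVk
    have : ∑ a ∈ (Finset.range N).erase k, muSet G.mu (exactPart G.V p a)
        = muSet G.mu G.V - muSet G.mu (exactPart G.V p k) := by linarith
    rw [this, hc]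
    linarith
  have hytail : ∑ b ∈ (Finset.range N).erase k, y b ≤ c := by
    have e0 := Finset.add_sum_erase (Finset.range N)
      (fun b => muSet G.mu (exactPart G.W p b)) (Finset.mem_range.mpr hkN)
    rw [hysum] at e0
    have e1 : ∑ b ∈ (Finset.range N).erase k, y b
        = (∑ b ∈ (Finset.range N).erase k, muSet G.mu (exactPart G.W p b)) / muSet G.mu G.W := by
      rw [Finset.sum_div]
    rw [e1]
    rw [div_le_iff₀ hZ2]
    have h2 : (1 - C2 τ M / p) * muSet G.mu G.W ≤ muSet G.mu (exactPart G.W p k) :=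
      (le_div_iff₀ hZ2).mp hWk
    have : ∑ b ∈ (Finset.range N).erase k, muSet G.mu (exactPart G.W p b)
        = muSet G.mu G.W - muSet G.mu (exactPart G.W p k) := by linarith
    rw [this, hc]
    linarith
  set T := (Finset.range N ×ˢ Finset.range N).filter (fun ab : ℕ×ℕ => ab.1 ≠ ab.2) with hT
  set Ep := G.E.filter (fun e => p ∈ (e.1 * e.2 / Nat.gcd e.1 e.2 ^ 2).primeFactors) with hEp
  have hmaps : ∀ e ∈ Ep, (e.1.factorization p, e.2.factorization p) ∈ T := by
    intro e he
    simp only [hEp, Finset.mem_filter] at he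
    have heE := he.1
    have hVmem : e.1 ∈ G.V := (Finset.mem_product.mp (G.E_sub heE)).1
    have hWmem : e.2 ∈ G.W := (Finset.mem_product.mp (G.E_sub heE)).2
    have h1 : 0 < e.1 := G.V_pos _ hVmem
    have h2 : 0 < e.2 := G.W_pos _ hWmem
    have hne := val_ne_of_mem_primeFactors hp h1 h2 he.2
    have hlt1 : e.1.factorization p < N := lt_trans (factorization_lt_self h1 hp) (hVN _ hVmem)
    have hlt2 : e.2.factorization p < N := lt_trans (factorization_lt_self h2 hp) (hWN _ hWmem)
    simp only [hT, Finset.mem_filter, Finset.mem_product, Finset.mem_range]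
    exact ⟨⟨hlt1, hlt2⟩, hne⟩
  have hdecomp := Finset.sum_fiberwise_of_maps_to hmaps (fun e => G.mu e.1 * G.mu e.2)
  have hfib : ∀ ab ∈ T,
      ∑ e ∈ Ep.filter (fun e => (e.1.factorization p, e.2.factorization p) = ab),
        G.mu e.1 * G.mu e.2 ≤ muEdges G.mu (edgesAt G p ab.1 ab.2) := by
    intro ab _
    apply Finset.sum_le_sum_of_subset_of_nonneg
    · intro e he
      simp only [Finset.mem_filter, hEp] at he
      obtain ⟨⟨heE, _⟩, heq⟩ := he
      have hVmem : e.1 ∈ G.V := (Finset.mem_product.mp (G.E_sub heE)).1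
      have hWmem : e.2 ∈ G.W := (Finset.mem_product.mp (G.E_sub heE)).2
      have heq1 : e.1.factorization p = ab.1 := by
        have := congrArg Prod.fst heq; simpa using this
      have heq2 : e.2.factorization p = ab.2 := by
        have := congrArg Prod.snd heq; simpa using this
      simp only [edgesAt, Finset.mem_filter]
      exact ⟨heE, (mem_exactPart_iff G.V_pos hp hVmem).mpr heq1,
        (mem_exactPart_iff G.W_pos hp hWmem).mpr heq2⟩
    · intro e _ _; exact mul_nonneg (hμ _) (hμ _)
  have hnum1 : c ^ θ * rp ≤ C2 τ M / p := by
    have e1 : c ^ θ * rp = C2 τ M ^ θ * (((p:ℝ) ^ θ) * ((p:ℝ) ^ (1/(2+τ))))⁻¹ := by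
      rw [hc, hrpd, Real.div_rpow hC20.le hp0.le, Real.rpow_neg hp0.le]
      ring
    have e2 : ((p:ℝ) ^ θ) * ((p:ℝ) ^ (1/(2+τ))) = p := by
      rw [← Real.rpow_add hp0, show θ + 1/(2+τ) = (1:ℝ) by rw [hθd]; field_simp; ring,
        Real.rpow_one]
    rw [e1, e2]
    have h3 : C2 τ M ^ θ ≤ C2 τ M := by
      nth_rewrite 2 [← Real.rpow_one (C2 τ M)]
      exact Real.rpow_le_rpow_of_exponent_le hC21 hθ2
    rw [div_eq_mul_inv]
    exact mul_le_mul_of_nonneg_right h3 (inv_nonneg.mpr hp0.le)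
  have hnum2 : c ^ (2*θ) * rp ≤ C2 τ M ^ 2 / p := by
    have e1 : c ^ (2*θ) * rp
        = C2 τ M ^ (2*θ) * (((p:ℝ) ^ (2*θ)) * ((p:ℝ) ^ (1/(2+τ))))⁻¹ := by
      rw [hc, hrpd, Real.div_rpow hC20.le hp0.le, Real.rpow_neg hp0.le]
      ring
    have e2 : ((p:ℝ) ^ (2*θ)) * ((p:ℝ) ^ (1/(2+τ))) = (p:ℝ) ^ (2*θ + 1/(2+τ)) := by
      rw [← Real.rpow_add hp0]
    have h3 : C2 τ M ^ (2*θ) ≤ C2 τ M ^ 2 := by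
      calc C2 τ M ^ (2*θ) ≤ C2 τ M ^ ((2:ℕ):ℝ) :=
            Real.rpow_le_rpow_of_exponent_le hC21 (by push_cast; linarith)
        _ = C2 τ M ^ (2:ℕ) := Real.rpow_natCast _ 2
    have h4 : ((p:ℝ) ^ (2*θ + 1/(2+τ)))⁻¹ ≤ ((p:ℝ))⁻¹ := by
      apply inv_anti₀ hp0
      nth_rewrite 1 [← Real.rpow_one (p:ℝ)]
      apply Real.rpow_le_rpow_of_exponent_le hp1
      rw [hθd]
      rw [show 2*((1+τ)/(2+τ)) + 1/(2+τ) = (2*(1+τ)+1)/(2+τ) by field_simp]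
      rw [le_div_iff₀ hτ2]
      linarith
    rw [e1, e2]
    calc C2 τ M ^ (2*θ) * ((p:ℝ) ^ (2*θ + 1/(2+τ)))⁻¹
        ≤ C2 τ M ^ 2 * ((p:ℝ))⁻¹ := by
          apply mul_le_mul h3 h4 (inv_nonneg.mpr (Real.rpow_nonneg hp0.le _)) (by positivity)
      _ = C2 τ M ^ 2 / p := by rw [div_eq_mul_inv]
  calc muEdges G.mu Ep
      = ∑ ab ∈ T, ∑ e ∈ Ep.filter
          (fun e => (e.1.factorization p, e.2.factorization p) = ab),
          G.mu e.1 * G.mu e.2 := by rw [muEdges, ← hdecomp]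
    _ ≤ ∑ ab ∈ T, muEdges G.mu (edgesAt G p ab.1 ab.2) := Finset.sum_le_sum hfib
    _ ≤ ∑ ab ∈ T, M * muEdges G.mu G.E * ((x ab.1) * (y ab.2)) ^ θ
          * rp ^ (((ab.1:ℤ) - ab.2).natAbs) := by
        refine Finset.sum_le_sum fun ab hab => ?_
        have habne : ab.1 ≠ ab.2 := by
          simp only [hT, Finset.mem_filter] at hab
          exact hab.2
        exact pair_bound τ M hτ0 (by linarith) G hZ1 hZ2 hp hpP habne
          (hqlt ab.1 ab.2 habne)
    _ = M * muEdges G.mu G.E * ∑ ab ∈ T, ((x ab.1) * (y ab.2)) ^ θ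
          * rp ^ (((ab.1:ℤ) - ab.2).natAbs) := by
        rw [Finset.mul_sum]
        exact Finset.sum_congr rfl fun ab _ => by ring
    _ ≤ M * muEdges G.mu G.E * (16 * (c ^ θ + c ^ (2*θ)) * rp) := by
        refine mul_le_mul_of_nonneg_left ?_ (mul_nonneg hM0 hE0)
        exact pair_sum_bound N k x y hx0 hy0 hxk hyk c hc0 hxtail hytail hrp0 hrp34 hθ1 hθ2
    _ ≤ 32 * M * C2 τ M ^ 2 / p * muEdges G.mu G.E := by
        have h5 : 16 * (c ^ θ + c ^ (2*θ)) * rp ≤ 32 * C2 τ M ^ 2 / p := by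
          have ha := mul_le_mul_of_nonneg_left hnum1 (by norm_num : (0:ℝ) ≤ 16)
          have hb := mul_le_mul_of_nonneg_left hnum2 (by norm_num : (0:ℝ) ≤ 16)
          have hcc2 : C2 τ M / (p:ℝ) ≤ C2 τ M ^ 2 / (p:ℝ) := by
            rw [div_eq_mul_inv, div_eq_mul_inv]
            refine mul_le_mul_of_nonneg_right ?_ (inv_nonneg.mpr hp0.le)
            calc C2 τ M = C2 τ M * 1 := (mul_one _).symm
              _ ≤ C2 τ M * C2 τ M := mul_le_mul_of_nonneg_left hC21 hC20.le
              _ = C2 τ M ^ 2 := (sq _).symm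
          have expand : 16 * (c ^ θ + c ^ (2*θ)) * rp
              = 16 * (c ^ θ * rp) + 16 * (c ^ (2*θ) * rp) := by ring
          rw [expand, show 32 * C2 τ M ^ 2 / (p:ℝ)
              = 16 * (C2 τ M ^ 2 / (p:ℝ)) + 16 * (C2 τ M ^ 2 / (p:ℝ)) by ring]
          linarith
        calc M * muEdges G.mu G.E * (16 * (c ^ θ + c ^ (2*θ)) * rp)
            ≤ M * muEdges G.mu G.E * (32 * C2 τ M ^ 2 / p) :=
              mul_le_mul_of_nonneg_left h5 (mul_nonneg hM0 hE0)
          _ = 32 * M * C2 τ M ^ 2 / p * muEdges G.mu G.E := by ring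

lemma mertens_light (T : Finset ℕ) (n : ℕ) (hn : 2 ≤ n)
    (hT : ∀ p ∈ T, Nat.Prime p ∧ 4 ≤ p ∧ p ≤ n) :
    ∑ p ∈ T, ((p:ℝ))⁻¹ ≤ 4 * (1 + Real.log (Nat.log 2 n)) := by
  classical
  set J := Nat.log 2 n with hJ
  have hmaps : ∀ p ∈ T, Nat.log 2 p ∈ Finset.range (J+1) := fun p hp =>
    Finset.mem_range.mpr (Nat.lt_succ_of_le (Nat.log_mono_right (hT p hp).2.2))
  have hdecomp := Finset.sum_fiberwise_of_maps_to hmaps (fun p => ((p:ℝ))⁻¹)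
  rw [← hdecomp]
  have hfiber : ∀ j ∈ Finset.range (J+1),
      ∑ p ∈ T.filter (fun p => Nat.log 2 p = j), ((p:ℝ))⁻¹
        ≤ (if j = 0 then 0 else 4 / (j:ℝ)) := by
    intro j _
    by_cases hj0 : j = 0
    · subst hj0
      have hemp : T.filter (fun p => Nat.log 2 p = 0) = ∅ := by
        rw [Finset.filter_eq_empty_iff]
        intro p hp
        have h4 : 4 ≤ p := (hT p hp).2.1
        have h1 : 1 ≤ Nat.log 2 p :=
          (Nat.le_log_iff_pow_le one_lt_two (by omega)).mpr (by omega)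
        omega
      rw [hemp]
      simp
    · rw [if_neg hj0]
      set S := T.filter (fun p => Nat.log 2 p = j) with hS
      have hj1 : 1 ≤ j := Nat.one_le_iff_ne_zero.mpr hj0
      have hSlb : ∀ p ∈ S, 2^j ≤ p ∧ p < 2^(j+1) := by
        intro p hp
        simp only [hS, Finset.mem_filter] at hp
        have hp0 : p ≠ 0 := by have := (hT p hp.1).2.1; omega
        constructor
        · rw [← hp.2]; exact Nat.pow_log_le_self 2 hp0
        · rw [← hp.2]; exact Nat.lt_pow_succ_log_self one_lt_two p
      have hcard : S.card * j ≤ 2^(j+2) := by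
        have h1 : (2^j) ^ S.card ≤ ∏ p ∈ S, p := by
          rw [← Finset.prod_const]
          exact Finset.prod_le_prod' fun p hp => (hSlb p hp).1
        have h2 : ∏ p ∈ S, p ≤ primorial (2^(j+1)) := by
          apply Finset.prod_le_prod_of_subset_of_one_le'
          · intro p hp
            refine Finset.mem_filter.mpr ⟨Finset.mem_range.mpr ?_,
              (hT p (Finset.mem_filter.mp hp).1).1⟩
            have := (hSlb p hp).2
            omega
          · intro p hp _
            exact (Finset.mem_filter.mp hp).2.one_lt.le
        have h3 : primorial (2^(j+1)) ≤ 4 ^ (2^(j+1)) := primorial_le_4_pow _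
        have h4 : (4:ℕ) ^ (2^(j+1)) = 2 ^ (2^(j+2)) := by
          rw [show (4:ℕ) = 2^2 by norm_num, ← pow_mul]
          congr 1
          rw [pow_succ 2 (j+1)]
          ring
        have h5 : (2:ℕ)^(j * S.card) ≤ 2^(2^(j+2)) := by
          calc (2:ℕ)^(j * S.card) = (2^j)^S.card := pow_mul 2 j S.card
            _ ≤ ∏ p ∈ S, p := h1
            _ ≤ primorial (2^(j+1)) := h2
            _ ≤ 4^(2^(j+1)) := h3
            _ = 2^(2^(j+2)) := h4
        have h6 := (Nat.pow_le_pow_iff_right (by norm_num : 1 < 2)).mp h5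
        rwa [Nat.mul_comm] at h6
      have hsum : ∑ p ∈ S, ((p:ℝ))⁻¹ ≤ (S.card : ℝ) * (((2:ℝ)^j))⁻¹ := by
        have := Finset.sum_le_card_nsmul S (fun p => ((p:ℝ))⁻¹) (((2:ℝ)^j)⁻¹) ?_
        · rwa [nsmul_eq_mul] at this
        · intro p hp
          have h1 := (hSlb p hp).1
          have h2 : ((2:ℝ)^j) ≤ (p:ℝ) := by exact_mod_cast h1
          exact inv_anti₀ (by positivity) h2
      have hcardR : (S.card:ℝ) ≤ (2:ℝ)^(j+2) / j := by
        rw [le_div_iff₀ (by exact_mod_cast hj1 : (0:ℝ) < (j:ℝ))]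
        exact_mod_cast hcard
      calc ∑ p ∈ S, ((p:ℝ))⁻¹ ≤ (S.card : ℝ) * ((2:ℝ)^j)⁻¹ := hsum
        _ ≤ ((2:ℝ)^(j+2)/j) * ((2:ℝ)^j)⁻¹ :=
            mul_le_mul_of_nonneg_right hcardR (by positivity)
        _ = 4 / j := by
            rw [pow_add]
            field_simp
            ring
  calc ∑ j ∈ Finset.range (J+1), ∑ p ∈ T.filter (fun p => Nat.log 2 p = j), ((p:ℝ))⁻¹
      ≤ ∑ j ∈ Finset.range (J+1), (if j = 0 then 0 else 4/(j:ℝ)) :=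
        Finset.sum_le_sum hfiber
    _ = ∑ j ∈ (Finset.range (J+1)).erase 0, 4/(j:ℝ) := by
        rw [← Finset.sum_erase (Finset.range (J+1))
          (f := fun j => if j = 0 then 0 else 4/(j:ℝ)) (if_pos rfl)]
        exact Finset.sum_congr rfl fun j hj => if_neg (Finset.ne_of_mem_erase hj)
    _ = 4 * ∑ j ∈ (Finset.range (J+1)).erase 0, ((j:ℝ))⁻¹ := by
        rw [Finset.mul_sum]
        exact Finset.sum_congr rfl fun j _ => by rw [div_eq_mul_inv]
    _ = 4 * ((harmonic J : ℚ) : ℝ) := by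
        congr 1
        have hset : (Finset.range (J+1)).erase 0 = Finset.Icc 1 J := by
          ext i
          simp only [Finset.mem_erase, Finset.mem_range, Finset.mem_Icc]
          omega
        rw [hset, harmonic_eq_sum_Icc]
        push_cast
        rfl
    _ ≤ 4 * (1 + Real.log J) := by
        have := harmonic_le_one_add_log J
        linarith


/-- Restrict the edge set of a GCD graph. -/
def restrictEdges (G : GCDGraph) (E' : Finset (ℕ × ℕ)) (hE' : E' ⊆ G.E) : GCDGraph where
  mu := G.mu
  mu_nonneg := G.mu_nonneg
  V := G.V
  W := G.W
  V_pos := G.V_pos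
  W_pos := G.W_pos
  E := E'
  E_sub := fun e he => G.E_sub (hE' he)
  P := G.P
  P_prime := G.P_prime
  f := G.f
  g := G.g
  f_dvd := G.f_dvd
  g_dvd := G.g_dvd
  gcd_exact := fun p hp e he => G.gcd_exact p hp e (hE' he)

lemma restrictEdges_quality (τ : ℝ) (G : GCDGraph) (E' : Finset (ℕ × ℕ)) (h : E' ⊆ G.E) :
    quality τ (restrictEdges G E' h) =
      densityRaw G.mu G.V G.W E' ^ (2 + τ) * muSet G.mu G.V * muSet G.mu G.W
        * ∏ q ∈ G.P, pfac τ G.f G.g q := rfl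


end CosAux

set_option maxHeartbeats 1600000 in
/-- Removing the effect of `R(G)` from `ω_t(v,w)` (`Cosmetic-ω`). -/
theorem cosmetic_omega (τ M : ℝ) (hτ : τ ∈ Set.Ioo (0 : ℝ) (1 / 100)) (hM : 2 ≤ M)
    (G : GCDGraph) (hmax : IsMaximal τ G) (hδ : 0 < G.density)
    (t U : ℝ) (ht : Real.exp (Real.exp (C6 τ M)) ≤ t)
    (hU : 2 * C6 τ M * Real.log (Real.log t) ≤ U)
    (hflat : Rflat τ M G = ∅)
    (hE : ∀ e ∈ G.E, U ≤ (omegaFun t e.1 e.2 : ℝ)) :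
    ∃ G' : GCDGraph, IsSubgraph G' G ∧
      G'.V = G.V ∧ G'.W = G.W ∧ G'.E ⊆ G.E ∧ G'.P = G.P ∧ G'.f = G.f ∧ G'.g = G.g ∧
      quality τ G / 2 ≤ quality τ G' ∧ 0 < quality τ G / 2 ∧
      ∀ e ∈ G'.E, U / 2 ≤ (omegaFunRes (C6 τ M) t (R G) e.1 e.2 : ℝ) := by
  classical
  obtain ⟨hτ0, hτ1⟩ := hτ
  have hM0 : (0:ℝ) ≤ M := by linarith
  have hM1 : (1:ℝ) ≤ M := by linarith
  have hC2two := CosAux.C2_two hτ0 hτ1 hM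
  have hC20 : (0:ℝ) < C2 τ M := by linarith
  have hC6_30 := CosAux.C6_ge_30 hτ0 hτ1 hM
  have hC6big := CosAux.C6_big hτ0 hτ1 hM
  have hC60 : (0:ℝ) < C6 τ M := by linarith
  -- log facts
  have ht0 : (0:ℝ) < t := lt_of_lt_of_le (Real.exp_pos _) ht
  have hlogt : Real.exp (C6 τ M) ≤ Real.log t := by
    have := Real.log_le_log (Real.exp_pos _) ht
    rwa [Real.log_exp] at this
  have hlogt0 : (0:ℝ) < Real.log t := lt_of_lt_of_le (Real.exp_pos _) hlogt
  set L := Real.log (Real.log t) with hLdef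
  have hLC6 : C6 τ M ≤ L := by
    have := Real.log_le_log (Real.exp_pos _) hlogt
    rwa [Real.log_exp] at this
  have hL8 : (8:ℝ) ≤ L := by linarith
  have hL0 : (0:ℝ) < L := by linarith
  have hUC6L : 2 * C6 τ M * L ≤ U := hU
  have hC6L : 30 * C6 τ M ≤ C6 τ M * L := by
    have := mul_le_mul_of_nonneg_left hLC6 hC60.le
    nlinarith
  have hUpos : (0:ℝ) < U := by nlinarith
  have hU4C6 : 4 * (C6 τ M + 1) ≤ U := by nlinarith
  -- positivity of the graph data
  have hμ := G.mu_nonneg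
  have hZZ : 0 < muSet G.mu G.V * muSet G.mu G.W := by
    by_contra h
    push_neg at h
    have h0 : muSet G.mu G.V * muSet G.mu G.W = 0 :=
      le_antisymm h (mul_nonneg (CosAux.muSet_nonneg _ hμ _) (CosAux.muSet_nonneg _ hμ _))
    rw [GCDGraph.density, densityRaw, h0, div_zero] at hδ
    exact lt_irrefl _ hδ
  have hEE : 0 < muEdges G.mu G.E := by
    by_contra h
    push_neg at h
    have h0 : muEdges G.mu G.E = 0 := le_antisymm h (CosAux.muEdges_nonneg _ hμ _)
    rw [GCDGraph.density, densityRaw, h0, zero_div] at hδ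
    exact lt_irrefl _ hδ
  have hZ1 : 0 < muSet G.mu G.V := by
    rcases eq_or_lt_of_le (CosAux.muSet_nonneg G.mu hμ G.V) with h | h
    · exfalso; rw [← h, zero_mul] at hZZ; exact lt_irrefl _ hZZ
    · exact h
  have hZ2 : 0 < muSet G.mu G.W := by
    rcases eq_or_lt_of_le (CosAux.muSet_nonneg G.mu hμ G.W) with h | h
    · exfalso; rw [← h, mul_zero] at hZZ; exact lt_irrefl _ hZZ
    · exact h
  have hPP0 := CosAux.prodP_pos hτ0 G
  have hδ' : 0 < densityRaw G.mu G.V G.W G.E := hδ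
  have hq0 : 0 < quality τ G := by
    rw [quality, CosAux.qualityRaw_eq]
    exact mul_pos (mul_pos (mul_pos (Real.rpow_pos_of_pos hδ' _) hZ1) hZ2) hPP0
  -- bad-edge counting function
  set Bf : ℕ × ℕ → Finset ℕ := fun e =>
    (e.1 * e.2 / Nat.gcd e.1 e.2 ^ 2).primeFactors.filter
      (fun q => C6 τ M < (q:ℝ) ∧ (q:ℝ) ≤ t ∧ q ∈ R G) with hBf
  set E' := G.E.filter (fun e => ((Bf e).card : ℝ) ≤ U/4) with hE'def
  have hE'sub : E' ⊆ G.E := Finset.filter_subset _ _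
  set K := (Finset.range (⌊t⌋₊+1)).filter
    (fun q => Nat.Prime q ∧ C6 τ M < (q:ℝ) ∧ (q:ℝ) ≤ t ∧ q ∈ R G) with hK
  have hBfK : ∀ e, Bf e = K.filter
      (fun q => q ∈ (e.1 * e.2 / Nat.gcd e.1 e.2 ^ 2).primeFactors) := by
    intro e
    ext q
    simp only [hBf, hK, Finset.mem_filter, Finset.mem_range]
    constructor
    · rintro ⟨hqpf, h1, h2, h3⟩
      refine ⟨⟨?_, Nat.prime_of_mem_primeFactors hqpf, h1, h2, h3⟩, hqpf⟩
      have : q ≤ ⌊t⌋₊ := Nat.le_floor h2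
      omega
    · rintro ⟨⟨_, _, h1, h2, h3⟩, hqpf⟩
      exact ⟨hqpf, h1, h2, h3⟩
  have hswap : ∑ e ∈ G.E, (G.mu e.1 * G.mu e.2) * ((Bf e).card : ℝ)
      = ∑ q ∈ K, muEdges G.mu (G.E.filter
          (fun e => q ∈ (e.1 * e.2 / Nat.gcd e.1 e.2 ^ 2).primeFactors)) := by
    have e1 : ∀ e : ℕ × ℕ, ((Bf e).card : ℝ)
        = ∑ q ∈ K, (if q ∈ (e.1 * e.2 / Nat.gcd e.1 e.2 ^ 2).primeFactors
            then (1:ℝ) else 0) := by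
      intro e
      rw [hBfK e, Finset.card_filter]
      push_cast
      rfl
    calc ∑ e ∈ G.E, (G.mu e.1 * G.mu e.2) * ((Bf e).card : ℝ)
        = ∑ e ∈ G.E, ∑ q ∈ K,
            (if q ∈ (e.1 * e.2 / Nat.gcd e.1 e.2 ^ 2).primeFactors
              then G.mu e.1 * G.mu e.2 else 0) := by
          refine Finset.sum_congr rfl fun e _ => ?_
          rw [e1 e, Finset.mul_sum]
          exact Finset.sum_congr rfl fun q _ => by rw [mul_ite, mul_one, mul_zero]
      _ = ∑ q ∈ K, ∑ e ∈ G.E,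
            (if q ∈ (e.1 * e.2 / Nat.gcd e.1 e.2 ^ 2).primeFactors
              then G.mu e.1 * G.mu e.2 else 0) := Finset.sum_comm
      _ = ∑ q ∈ K, muEdges G.mu (G.E.filter
            (fun e => q ∈ (e.1 * e.2 / Nat.gcd e.1 e.2 ^ 2).primeFactors)) := by
          refine Finset.sum_congr rfl fun q _ => ?_
          rw [muEdges, Finset.sum_filter]
  have hperp : ∀ q ∈ K, muEdges G.mu (G.E.filter
        (fun e => q ∈ (e.1 * e.2 / Nat.gcd e.1 e.2 ^ 2).primeFactors))
      ≤ 32 * M * C2 τ M ^ 2 * muEdges G.mu G.E * ((q:ℝ))⁻¹ := by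
    intro q hq'
    simp only [hK, Finset.mem_filter] at hq'
    obtain ⟨-, hqp, hq1, hq2, hq3⟩ := hq'
    have hsharp : q ∈ Rsharp τ M G := (Set.diff_eq_empty.mp hflat) hq3
    have h := CosAux.per_prime τ M hτ0 hτ1 hM G hZ1 hZ2 hqp hq1 hsharp
    calc muEdges G.mu (G.E.filter
          (fun e => q ∈ (e.1 * e.2 / Nat.gcd e.1 e.2 ^ 2).primeFactors))
        ≤ 32 * M * C2 τ M ^ 2 / q * muEdges G.mu G.E := h
      _ = 32 * M * C2 τ M ^ 2 * muEdges G.mu G.E * ((q:ℝ))⁻¹ := by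
          rw [div_eq_mul_inv]; ring
  have hmert : ∑ q ∈ K, ((q:ℝ))⁻¹ ≤ 5 * L := by
    have h2t : (2:ℝ) ≤ t := by
      have h1 : C6 τ M + 1 ≤ Real.exp (C6 τ M) := Real.add_one_le_exp _
      have h2 : Real.exp (C6 τ M) + 1 ≤ Real.exp (Real.exp (C6 τ M)) := Real.add_one_le_exp _
      linarith
    have hfl2 : 2 ≤ ⌊t⌋₊ := Nat.le_floor (by exact_mod_cast h2t)
    have hKcond : ∀ q ∈ K, Nat.Prime q ∧ 4 ≤ q ∧ q ≤ ⌊t⌋₊ := by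
      intro q hq'
      simp only [hK, Finset.mem_filter] at hq'
      obtain ⟨-, hqp, hq1, hq2, -⟩ := hq'
      refine ⟨hqp, ?_, Nat.le_floor hq2⟩
      by_contra hcon
      push_neg at hcon
      have : (q:ℝ) ≤ 3 := by exact_mod_cast Nat.lt_succ_iff.mp hcon
      linarith
    have h1 := CosAux.mertens_light K ⌊t⌋₊ hfl2 hKcond
    set Jn := Nat.log 2 ⌊t⌋₊ with hJn
    have hJ1 : 1 ≤ Jn := by
      apply (Nat.le_log_iff_pow_le one_lt_two (by omega)).mpr
      simpa using hfl2
    have hJle : (Jn:ℝ) ≤ 2 * Real.log t := by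
      have h2J : (2:ℝ)^Jn ≤ t := by
        have h3 := Nat.pow_log_le_self 2 (show ⌊t⌋₊ ≠ 0 by omega)
        calc ((2:ℝ))^Jn = ((2^Jn : ℕ):ℝ) := by push_cast; ring
          _ ≤ (⌊t⌋₊ : ℝ) := by exact_mod_cast h3
          _ ≤ t := Nat.floor_le ht0.le
      have hlog := Real.log_le_log (by positivity) h2J
      rw [Real.log_pow] at hlog
      have hl2 : (0.6931471803:ℝ) < Real.log 2 := Real.log_two_gt_d9
      nlinarith
    have hlogJ : Real.log Jn ≤ 1 + L := by
      have hJn0 : (0:ℝ) < (Jn:ℝ) := by exact_mod_cast hJ1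
      calc Real.log Jn ≤ Real.log (2 * Real.log t) := Real.log_le_log hJn0 hJle
        _ = Real.log 2 + L := Real.log_mul (by norm_num) hlogt0.ne'
        _ ≤ 1 + L := by
            have := Real.log_two_lt_d9
            linarith
    calc ∑ q ∈ K, ((q:ℝ))⁻¹ ≤ 4*(1 + Real.log Jn) := h1
      _ ≤ 4*(2 + L) := by linarith
      _ ≤ 5 * L := by linarith
  -- Markov
  have hbad : muEdges G.mu (G.E.filter (fun e => ¬ ((Bf e).card : ℝ) ≤ U/4))
      ≤ (1/10) * muEdges G.mu G.E := by
    have h1 : muEdges G.mu (G.E.filter (fun e => ¬ ((Bf e).card:ℝ) ≤ U/4))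
        ≤ (4/U) * ∑ e ∈ G.E, (G.mu e.1 * G.mu e.2) * ((Bf e).card : ℝ) := by
      rw [muEdges, Finset.mul_sum]
      calc ∑ e ∈ G.E.filter (fun e => ¬ ((Bf e).card:ℝ) ≤ U/4), G.mu e.1 * G.mu e.2
          ≤ ∑ e ∈ G.E.filter (fun e => ¬ ((Bf e).card:ℝ) ≤ U/4),
              (4/U) * ((G.mu e.1 * G.mu e.2) * ((Bf e).card : ℝ)) := by
            refine Finset.sum_le_sum fun e he => ?_
            have hc : U/4 < ((Bf e).card:ℝ) := by
              simp only [Finset.mem_filter] at he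
              exact not_le.mp he.2
            have hμe : 0 ≤ G.mu e.1 * G.mu e.2 := mul_nonneg (hμ _) (hμ _)
            calc G.mu e.1 * G.mu e.2
                = (4/U) * ((G.mu e.1 * G.mu e.2) * (U/4)) := by field_simp
              _ ≤ (4/U) * ((G.mu e.1 * G.mu e.2) * ((Bf e).card : ℝ)) := by
                  exact mul_le_mul_of_nonneg_left
                    (mul_le_mul_of_nonneg_left hc.le hμe)
                    (div_nonneg (by norm_num) hUpos.le)
        _ ≤ ∑ e ∈ G.E, (4/U) * ((G.mu e.1 * G.mu e.2) * ((Bf e).card : ℝ)) := by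
            apply Finset.sum_le_sum_of_subset_of_nonneg (Finset.filter_subset _ _)
            intro e _ _
            have hμe : 0 ≤ G.mu e.1 * G.mu e.2 := mul_nonneg (hμ _) (hμ _)
            exact mul_nonneg (div_nonneg (by norm_num) hUpos.le)
              (mul_nonneg hμe (Nat.cast_nonneg _))
    have h2 : ∑ e ∈ G.E, (G.mu e.1 * G.mu e.2) * ((Bf e).card : ℝ)
        ≤ 32 * M * C2 τ M ^ 2 * muEdges G.mu G.E * (5*L) := by
      rw [hswap]
      calc ∑ q ∈ K, muEdges G.mu (G.E.filter
            (fun e => q ∈ (e.1 * e.2 / Nat.gcd e.1 e.2 ^ 2).primeFactors))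
          ≤ ∑ q ∈ K, 32 * M * C2 τ M ^ 2 * muEdges G.mu G.E * ((q:ℝ))⁻¹ :=
            Finset.sum_le_sum hperp
        _ = 32 * M * C2 τ M ^ 2 * muEdges G.mu G.E * ∑ q ∈ K, ((q:ℝ))⁻¹ := by
            rw [← Finset.mul_sum]
        _ ≤ 32 * M * C2 τ M ^ 2 * muEdges G.mu G.E * (5*L) := by
            apply mul_le_mul_of_nonneg_left hmert
            have h32 : (0:ℝ) ≤ 32 * M * C2 τ M ^ 2 := by positivity
            exact mul_nonneg h32 hEE.le
    have h3 : (4/U) * (32 * M * C2 τ M ^ 2 * muEdges G.mu G.E * (5*L))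
        ≤ (1/10) * muEdges G.mu G.E := by
      have hfrac : 4/U ≤ 2/(C6 τ M * L) := by
        rw [div_le_div_iff₀ hUpos (mul_pos hC60 hL0)]
        linarith
      have hX0 : (0:ℝ) ≤ 32 * M * C2 τ M ^ 2 * muEdges G.mu G.E * (5*L) := by
        have h32 : (0:ℝ) ≤ 32 * M * C2 τ M ^ 2 := by positivity
        exact mul_nonneg (mul_nonneg h32 hEE.le) (by linarith : (0:ℝ) ≤ 5*L)
      calc (4/U) * (32 * M * C2 τ M ^ 2 * muEdges G.mu G.E * (5*L))
          ≤ (2/(C6 τ M * L)) * (32 * M * C2 τ M ^ 2 * muEdges G.mu G.E * (5*L)) :=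
            mul_le_mul_of_nonneg_right hfrac hX0
        _ = (320 * M * C2 τ M ^ 2 / C6 τ M) * muEdges G.mu G.E := by
            field_simp
            ring
        _ ≤ (1/10) * muEdges G.mu G.E := by
            refine mul_le_mul_of_nonneg_right ?_ hEE.le
            rw [div_le_div_iff₀ hC60 (by norm_num : (0:ℝ) < 10)]
            linarith
    calc muEdges G.mu (G.E.filter (fun e => ¬ ((Bf e).card : ℝ) ≤ U/4))
        ≤ (4/U) * ∑ e ∈ G.E, (G.mu e.1 * G.mu e.2) * ((Bf e).card : ℝ) := h1
      _ ≤ (4/U) * (32 * M * C2 τ M ^ 2 * muEdges G.mu G.E * (5*L)) :=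
          mul_le_mul_of_nonneg_left h2 (div_nonneg (by norm_num) hUpos.le)
      _ ≤ (1/10) * muEdges G.mu G.E := h3
  have hsplitE : muEdges G.mu E'
        + muEdges G.mu (G.E.filter (fun e => ¬ ((Bf e).card:ℝ) ≤ U/4))
      = muEdges G.mu G.E := by
    rw [hE'def, muEdges, muEdges, muEdges]
    exact Finset.sum_filter_add_sum_filter_not G.E _ _
  have hE'mu : (9/10:ℝ) * muEdges G.mu G.E ≤ muEdges G.mu E' := by linarith
  -- construct the subgraph
  refine ⟨CosAux.restrictEdges G E' hE'sub,
    ⟨rfl, subset_rfl, subset_rfl, hE'sub, subset_rfl, fun _ _ => rfl, fun _ _ => rfl⟩,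
    rfl, rfl, hE'sub, rfl, rfl, rfl, ?_, half_pos hq0, ?_⟩
  · -- quality
    have hδ'ge : (9/10) * G.density ≤ densityRaw G.mu G.V G.W E' := by
      rw [GCDGraph.density, densityRaw, densityRaw, ← mul_div_assoc]
      exact (div_le_div_iff_of_pos_right hZZ).mpr hE'mu
    have h12 : (1/2:ℝ) ≤ (9/10:ℝ) ^ ((2:ℝ)+τ) := by
      calc (1/2:ℝ) ≤ (9/10:ℝ)^((3:ℕ):ℝ) := by
            rw [Real.rpow_natCast]
            norm_num
        _ ≤ (9/10:ℝ) ^ ((2:ℝ)+τ) := by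
            apply Real.rpow_le_rpow_of_exponent_ge (by norm_num) (by norm_num)
            push_cast
            linarith
    have key : (1/2) * (G.density ^ ((2:ℝ)+τ)) ≤ densityRaw G.mu G.V G.W E' ^ ((2:ℝ)+τ) := by
      calc (1/2) * (G.density ^ ((2:ℝ)+τ))
          ≤ (9/10:ℝ) ^ ((2:ℝ)+τ) * G.density ^ ((2:ℝ)+τ) :=
            mul_le_mul_of_nonneg_right h12 (Real.rpow_nonneg hδ.le _)
        _ = ((9/10) * G.density) ^ ((2:ℝ)+τ) := (Real.mul_rpow (by norm_num) hδ.le).symm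
        _ ≤ densityRaw G.mu G.V G.W E' ^ ((2:ℝ)+τ) := by
            exact Real.rpow_le_rpow (mul_nonneg (by norm_num) hδ.le) hδ'ge (by linarith)
    calc quality τ G / 2
        = ((1/2) * (G.density ^ ((2:ℝ)+τ))) * muSet G.mu G.V * muSet G.mu G.W
            * ∏ q ∈ G.P, CosAux.pfac τ G.f G.g q := by
          rw [quality, CosAux.qualityRaw_eq]
          rw [GCDGraph.density]
          ring
      _ ≤ (densityRaw G.mu G.V G.W E' ^ ((2:ℝ)+τ)) * muSet G.mu G.V * muSet G.mu G.W
            * ∏ q ∈ G.P, CosAux.pfac τ G.f G.g q := by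
          apply mul_le_mul_of_nonneg_right (mul_le_mul_of_nonneg_right
            (mul_le_mul_of_nonneg_right key hZ1.le) hZ2.le) hPP0.le
      _ = quality τ (CosAux.restrictEdges G E' hE'sub) :=
          (CosAux.restrictEdges_quality τ G E' hE'sub).symm
  · -- per-edge bound
    intro e he
    have heE : e ∈ G.E := hE'sub he
    have hBle : ((Bf e).card : ℝ) ≤ U/4 := by
      have he' : e ∈ G.E.filter (fun e => ((Bf e).card : ℝ) ≤ U/4) := he
      exact (Finset.mem_filter.mp he').2
    set S := (e.1 * e.2 / Nat.gcd e.1 e.2 ^ 2).primeFactors with hS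
    have hsub : S.filter (fun q : ℕ => (q:ℝ) ≤ t)
        ⊆ (S.filter (fun q : ℕ => (q:ℝ) ≤ C6 τ M)) ∪ (Bf e
          ∪ S.filter (fun q : ℕ => C6 τ M < (q:ℝ) ∧ (q:ℝ) ≤ t ∧ q ∉ R G)) := by
      intro q hq'
      simp only [hBf, ← hS, Finset.mem_filter, Finset.mem_union] at hq' ⊢
      obtain ⟨hqS, hqt⟩ := hq'
      by_cases h1 : (q:ℝ) ≤ C6 τ M
      · exact Or.inl ⟨hqS, h1⟩
      · push_neg at h1
        by_cases h2 : q ∈ R G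
        · exact Or.inr (Or.inl ⟨hqS, h1, hqt, h2⟩)
        · exact Or.inr (Or.inr ⟨hqS, h1, hqt, h2⟩)
    have hcard : (S.filter (fun q : ℕ => (q:ℝ) ≤ t)).card
        ≤ (S.filter (fun q : ℕ => (q:ℝ) ≤ C6 τ M)).card + ((Bf e).card
          + (S.filter (fun q : ℕ => C6 τ M < (q:ℝ) ∧ (q:ℝ) ≤ t ∧ q ∉ R G)).card) := by
      calc (S.filter (fun q : ℕ => (q:ℝ) ≤ t)).card
          ≤ ((S.filter (fun q : ℕ => (q:ℝ) ≤ C6 τ M)) ∪ (Bf e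
              ∪ S.filter (fun q : ℕ => C6 τ M < (q:ℝ) ∧ (q:ℝ) ≤ t ∧ q ∉ R G))).card :=
            Finset.card_le_card hsub
        _ ≤ _ := le_trans (Finset.card_union_le _ _)
            (by exact Nat.add_le_add_left (Finset.card_union_le _ _) _)
    have hA4 : ((S.filter (fun q : ℕ => (q:ℝ) ≤ C6 τ M)).card : ℝ) ≤ C6 τ M + 1 := by
      have hsub4 : S.filter (fun q : ℕ => (q:ℝ) ≤ C6 τ M) ⊆ Finset.range (⌊C6 τ M⌋₊ + 1) := by
        intro q hq'
        simp only [Finset.mem_filter] at hq'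
        exact Finset.mem_range.mpr (Nat.lt_succ_of_le (Nat.le_floor hq'.2))
      have h5 := Finset.card_le_card hsub4
      rw [Finset.card_range] at h5
      calc ((S.filter (fun q : ℕ => (q:ℝ) ≤ C6 τ M)).card : ℝ)
          ≤ ((⌊C6 τ M⌋₊ + 1 : ℕ) : ℝ) := by exact_mod_cast h5
        _ ≤ C6 τ M + 1 := by
            push_cast
            have := Nat.floor_le hC60.le
            linarith
    have hωt : U ≤ ((S.filter (fun q : ℕ => (q:ℝ) ≤ t)).card : ℝ) := hE e heE
    have hgoal : ((S.filter (fun q : ℕ => C6 τ M < (q:ℝ) ∧ (q:ℝ) ≤ t ∧ q ∉ R G)).card : ℝ)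
        = (omegaFunRes (C6 τ M) t (R G) e.1 e.2 : ℝ) := by
      simp only [omegaFunRes, ← hS]
    rw [← hgoal]
    have hcR : ((S.filter (fun q : ℕ => (q:ℝ) ≤ t)).card : ℝ)
        ≤ ((S.filter (fun q : ℕ => (q:ℝ) ≤ C6 τ M)).card : ℝ) + (((Bf e).card : ℝ)
          + ((S.filter (fun q : ℕ => C6 τ M < (q:ℝ) ∧ (q:ℝ) ≤ t ∧ q ∉ R G)).card : ℝ)) := by
      exact_mod_cast hcard
    linarith
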